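/- arXiv:2111.14169 — 4 statements merged into one kernel-verified Lean document; each statement's English description precedes it below -/
import Mathlib

section
/- Let M be a left module over the Hecke algebra H_n(q), let Σ(M) = ∑_{i=1}^{n−1} {u ∈ M : T_i u = q u} and Υ(M) = ⋂_{i=1}^{n−1} (T_i − q)M. Then y_n M ⊆ Υ(M) and y_n Σ(M) = 0; moreover if [n]!_q ≠ 0 then the map induced by the action of y_n gives a linear bijection M/Σ(M) → Υ(M), and M = Υ(M) ⊕ Σ(M). -/
/-- The basic transposition `τ_i = (i, i+1)` (0-based) as a permutation of `ℕ`. -/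
def tau (i : ℕ) : Equiv.Perm ℕ := Equiv.swap i (i + 1)

/-- The Coxeter length of a permutation of `{0, …, n-1}`, computed as its number of
inversions. -/
def invLen (n : ℕ) (σ : Equiv.Perm ℕ) : ℕ :=
  ((Finset.range n ×ˢ Finset.range n).filter (fun p => p.1 < p.2 ∧ σ p.2 < σ p.1)).card

/-- The canonical embedding of the symmetric group `S_n = Perm (Fin n)` into the
permutations of `ℕ` (fixing every `m ≥ n`). -/
def permOfFin {n : ℕ} (σ : Equiv.Perm (Fin n)) : Equiv.Perm ℕ :=
  σ.extendDomain Fin.equivSubtype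

/-- The action of an algebra element `h : H` on an `H`-module `M`, as a `K`-linear map. -/
def hSmulLin {K H M : Type*} [Field K] [Ring H] [Algebra K H]
    [AddCommGroup M] [Module K M] [Module H M] [SMulCommClass K H M] (h : H) :
    M →ₗ[K] M where
  toFun m := h • m
  map_add' := smul_add h
  map_smul' c m := (smul_comm c h m).symm

namespace HA

open Equiv Finset

def FixGe (n : ℕ) (π : Equiv.Perm ℕ) : Prop := ∀ m, n ≤ m → π m = m

theorem fixge_one (n : ℕ) : FixGe n 1 := fun _ _ => rfl

theorem fixge_mul {n : ℕ} {π σ : Equiv.Perm ℕ} (h1 : FixGe n π) (h2 : FixGe n σ) :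
    FixGe n (π * σ) := fun m hm => by
  simp [Equiv.Perm.mul_apply, h2 m hm, h1 m hm]

theorem fixge_inv {n : ℕ} {π : Equiv.Perm ℕ} (h : FixGe n π) : FixGe n π⁻¹ := fun m hm => by
  conv_lhs => rw [← h m hm]
  simp

theorem fixge_mono {n k : ℕ} (hnk : n ≤ k) {π : Equiv.Perm ℕ} (h : FixGe n π) : FixGe k π :=
  fun m hm => h m (le_trans hnk hm)

theorem fixge_lt {n : ℕ} {π : Equiv.Perm ℕ} (h : FixGe n π) {m : ℕ} (hm : m < n) : π m < n := by
  by_contra hc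
  push_neg at hc
  have := fixge_inv h (π m) hc
  simp at this
  omega

theorem tau_left (i : ℕ) : tau i i = i + 1 := Equiv.swap_apply_left i (i+1)
theorem tau_right (i : ℕ) : tau i (i + 1) = i := Equiv.swap_apply_right i (i+1)
theorem tau_other {i j : ℕ} (h1 : j ≠ i) (h2 : j ≠ i + 1) : tau i j = j :=
  Equiv.swap_apply_of_ne_of_ne h1 h2

theorem tau_apply_def (i x : ℕ) :
    tau i x = if x = i then i + 1 else if x = i + 1 then i else x := by
  simp [tau, Equiv.swap_apply_def]

theorem tau_invol (i x : ℕ) : tau i (tau i x) = x := Equiv.swap_apply_self _ _ _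

theorem tau_mul_self (i : ℕ) : tau i * tau i = 1 := Equiv.swap_mul_self _ _

theorem tau_inv (i : ℕ) : (tau i)⁻¹ = tau i := Equiv.swap_inv _ _

theorem fixge_tau {n i : ℕ} (h : i + 1 < n) : FixGe n (tau i) := fun m hm =>
  tau_other (by omega) (by omega)

theorem fixge_permOfFin {n : ℕ} (σ : Equiv.Perm (Fin n)) : FixGe n (permOfFin σ) := fun m hm =>
  Equiv.Perm.extendDomain_apply_not_subtype σ Fin.equivSubtype (by simpa using not_lt.2 hm)

theorem permOfFin_apply {n : ℕ} (σ : Equiv.Perm (Fin n)) {m : ℕ} (hm : m < n) :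
    permOfFin σ m = (σ ⟨m, hm⟩ : Fin n) := by
  have : permOfFin σ m = permOfFin σ (Fin.equivSubtype ⟨m, hm⟩) := rfl
  rw [this, permOfFin, Equiv.Perm.extendDomain_apply_image]
  rfl

theorem permOfFin_mul {n : ℕ} (σ τ : Equiv.Perm (Fin n)) :
    permOfFin (σ * τ) = permOfFin σ * permOfFin τ :=
  (Equiv.Perm.extendDomain_mul _ σ τ).symm

theorem permOfFin_one {n : ℕ} : permOfFin (1 : Equiv.Perm (Fin n)) = 1 :=
  Equiv.Perm.extendDomain_one _

theorem permOfFin_injective {n : ℕ} : Function.Injective (permOfFin (n := n)) :=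
  Equiv.Perm.extendDomainHom_injective _

theorem tau_lt {i a b : ℕ} (hab : a < b) (hne : ¬(a = i ∧ b = i + 1)) : tau i a < tau i b := by
  rw [tau_apply_def, tau_apply_def]
  split_ifs <;> omega

def invSet (n : ℕ) (σ : Equiv.Perm ℕ) : Finset (ℕ × ℕ) :=
  (Finset.range n ×ˢ Finset.range n).filter (fun p => p.1 < p.2 ∧ σ p.2 < σ p.1)

theorem invLen_eq (n : ℕ) (σ : Equiv.Perm ℕ) : invLen n σ = (invSet n σ).card := rfl

theorem mem_invSet {n : ℕ} {σ : Equiv.Perm ℕ} {p : ℕ × ℕ} :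
    p ∈ invSet n σ ↔ p.1 < n ∧ p.2 < n ∧ p.1 < p.2 ∧ σ p.2 < σ p.1 := by
  simp [invSet, Finset.mem_filter, Finset.mem_product]; tauto

theorem invLen_one (n : ℕ) : invLen n 1 = 0 := by
  rw [invLen_eq, Finset.card_eq_zero, invSet, Finset.filter_eq_empty_iff]
  rintro ⟨a, b⟩ _
  simp only [Perm.one_apply]
  omega

theorem invLen_mul_tau {n : ℕ} {π : Equiv.Perm ℕ} {i : ℕ} (hi : i + 1 < n)
    (hasc : π i < π (i + 1)) : invLen n (π * tau i) = invLen n π + 1 := by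
  classical
  have htau : FixGe n (tau i) := fixge_tau hi
  have hmem : (i, i + 1) ∈ invSet n (π * tau i) := by
    rw [mem_invSet]
    refine ⟨by omega, hi, by omega, ?_⟩
    simp only [Perm.mul_apply, tau_left, tau_right]
    exact hasc
  have hcard : (invSet n π).card = ((invSet n (π * tau i)).erase (i, i + 1)).card := by
    apply Finset.card_bij' (fun p _ => (tau i p.1, tau i p.2)) (fun p _ => (tau i p.1, tau i p.2))
    · rintro ⟨a, b⟩ hp
      rw [mem_invSet] at hp
      obtain ⟨ha, hb, hab, hinv⟩ := hp
      have hinv : π b < π a := hinv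
      have hne : ¬(a = i ∧ b = i + 1) := by
        rintro ⟨rfl, rfl⟩; omega
      rw [Finset.mem_erase, mem_invSet]
      constructor
      · intro hcontr
        have h1 : tau i a = i := congrArg Prod.fst hcontr
        have h2 : tau i b = i + 1 := congrArg Prod.snd hcontr
        rw [tau_apply_def] at h1 h2
        split_ifs at h1 h2 <;> omega
      · refine ⟨fixge_lt htau ha, fixge_lt htau hb, tau_lt hab hne, ?_⟩
        simpa only [Perm.mul_apply, tau_invol] using hinv
    · rintro ⟨a, b⟩ hp
      rw [Finset.mem_erase, mem_invSet] at hp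
      obtain ⟨hne0, ha, hb, hab, hinv⟩ := hp
      have hne : ¬(a = i ∧ b = i + 1) := by
        rintro ⟨rfl, rfl⟩; exact hne0 rfl
      rw [mem_invSet]
      refine ⟨fixge_lt htau ha, fixge_lt htau hb, tau_lt hab hne, ?_⟩
      simpa only [Perm.mul_apply] using hinv
    · rintro ⟨a, b⟩ _; simp [tau_invol]
    · rintro ⟨a, b⟩ _; simp [tau_invol]
  rw [invLen_eq, invLen_eq, hcard, Finset.card_erase_of_mem hmem]
  have : 0 < (invSet n (π * tau i)).card := Finset.card_pos.2 ⟨_, hmem⟩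
  omega

theorem invLen_desc {n : ℕ} {π : Equiv.Perm ℕ} {i : ℕ} (hfix : FixGe n π) (hi : i + 1 < n)
    (hdesc : π (i + 1) < π i) : invLen n π = invLen n (π * tau i) + 1 := by
  have h1 : (π * tau i) i < (π * tau i) (i + 1) := by
    simp only [Perm.mul_apply]
    rw [tau_left, tau_right]
    exact hdesc
  have := invLen_mul_tau hi h1
  rw [mul_assoc, tau_mul_self, mul_one] at this
  omega

theorem invLen_tau {n i : ℕ} (hi : i + 1 < n) : invLen n (tau i) = 1 := by
  have := invLen_mul_tau (π := 1) hi (by simp)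
  simpa [invLen_one] using this

theorem invLen_inv (n : ℕ) (π : Equiv.Perm ℕ) (hfix : FixGe n π) :
    invLen n π⁻¹ = invLen n π := by
  rw [invLen_eq, invLen_eq]
  apply Finset.card_bij' (fun p _ => (π⁻¹ p.2, π⁻¹ p.1)) (fun p _ => (π p.2, π p.1))
  · rintro ⟨a, b⟩ hp
    rw [mem_invSet] at hp ⊢
    obtain ⟨ha, hb, hab, hinv⟩ := hp
    exact ⟨fixge_lt (fixge_inv hfix) hb, fixge_lt (fixge_inv hfix) ha, hinv, by simpa using hab⟩
  · rintro ⟨a, b⟩ hp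
    rw [mem_invSet] at hp ⊢
    obtain ⟨ha, hb, hab, hinv⟩ := hp
    exact ⟨fixge_lt hfix hb, fixge_lt hfix ha, hinv, by simpa using hab⟩
  · rintro ⟨a, b⟩ _; simp
  · rintro ⟨a, b⟩ _; simp

theorem asc_mono {n : ℕ} {π : Equiv.Perm ℕ} (hasc : ∀ i, i + 1 < n → π i < π (i + 1)) :
    ∀ b, b < n → ∀ a, a < b → π a < π b := by
  intro b
  induction b with
  | zero => omega
  | succ b ih =>
    intro hb a ha
    rcases Nat.lt_or_ge a b with h | h
    · exact lt_trans (ih (by omega) a h) (hasc b hb)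
    · have : a = b := by omega
      subst this; exact hasc a hb

theorem asc_le {n : ℕ} {π : Equiv.Perm ℕ} (hasc : ∀ i, i + 1 < n → π i < π (i + 1)) :
    ∀ m, m < n → m ≤ π m := by
  intro m
  induction m with
  | zero => omega
  | succ m ih => intro hm; have := hasc m hm; have := ih (by omega); omega

theorem no_desc_eq_one {n : ℕ} {π : Equiv.Perm ℕ} (hfix : FixGe n π)
    (hasc : ∀ i, i + 1 < n → π i < π (i + 1)) : π = 1 := by
  have hascinv : ∀ i, i + 1 < n → π⁻¹ i < π⁻¹ (i + 1) := by
    intro i hi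
    by_contra hc
    push_neg at hc
    have hne : π⁻¹ (i + 1) ≠ π⁻¹ i := fun h => by simpa using congrArg π h
    have h2 : π⁻¹ (i + 1) < π⁻¹ i := by omega
    have := asc_mono hasc (π⁻¹ i) (fixge_lt (fixge_inv hfix) (by omega)) _ h2
    simp at this
  ext m
  simp only [Perm.one_apply]
  rcases Nat.lt_or_ge m n with hm | hm
  · have h1 : m ≤ π m := asc_le hasc m hm
    have h2 : π m ≤ m := by
      have := asc_le hascinv (π m) (fixge_lt hfix hm)
      simpa using this
    omega
  · exact hfix m hm

theorem exists_desc {n : ℕ} {π : Equiv.Perm ℕ} (hfix : FixGe n π) (hne : π ≠ 1) :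
    ∃ i, i + 1 < n ∧ π (i + 1) < π i := by
  by_contra hc
  push_neg at hc
  refine hne (no_desc_eq_one hfix fun i hi => ?_)
  have := hc i hi
  have : π i ≠ π (i + 1) := fun h => by simpa using π.injective h
  omega

theorem invLen_le (n : ℕ) (π : Equiv.Perm ℕ) : invLen n π ≤ n * (n - 1) / 2 := by
  classical
  have h1 : invLen n π ≤
      ((Finset.range n ×ˢ Finset.range n).filter (fun p => p.1 < p.2)).card := by
    apply Finset.card_le_card
    intro p hp
    rw [Finset.mem_filter] at hp ⊢
    exact ⟨hp.1, hp.2.1⟩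
  have h2 : ((Finset.range n ×ˢ Finset.range n).filter (fun p => p.1 < p.2)) =
      (Finset.range n).biUnion (fun b => (Finset.range b).image (fun a => (a, b))) := by
    ext ⟨a, b⟩
    simp only [Finset.mem_filter, Finset.mem_product, Finset.mem_range, Finset.mem_biUnion,
      Finset.mem_image]
    constructor
    · rintro ⟨⟨ha, hb⟩, hab⟩; exact ⟨b, hb, a, hab, rfl⟩
    · rintro ⟨b', hb', a', ha', h⟩
      obtain ⟨rfl, rfl⟩ : a' = a ∧ b' = b := by
        constructor <;> [exact congrArg Prod.fst h; exact congrArg Prod.snd h]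
      exact ⟨⟨by omega, hb'⟩, ha'⟩
  have h3 : ((Finset.range n).biUnion (fun b => (Finset.range b).image (fun a => (a, b)))).card
      = ∑ b ∈ Finset.range n, b := by
    rw [Finset.card_biUnion]
    · apply Finset.sum_congr rfl
      intro b _
      rw [Finset.card_image_of_injective _ (fun x y h => congrArg Prod.fst h), Finset.card_range]
    · intro x _ y _ hxy
      simp only [Finset.disjoint_left, Finset.mem_image]
      rintro p ⟨a, _, rfl⟩ ⟨a', _, h⟩
      exact hxy (congrArg Prod.snd h).symm
  rw [h2, h3] at h1
  have h4 := Finset.sum_range_id_mul_two n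
  omega

end HA

namespace HA
open Equiv Finset

def finPermOf (n : ℕ) (π : Equiv.Perm ℕ) (h : FixGe n π) : Equiv.Perm (Fin n) :=
  (Fin.equivSubtype.symm).permCongr
    (π.subtypePerm (fun m => ⟨fun hm => by by_contra hc; push_neg at hc; rw [h m hc] at hm; omega,
      fun hm => fixge_lt h hm⟩))

theorem permOfFin_finPermOf (n : ℕ) (π : Equiv.Perm ℕ) (h : FixGe n π) :
    permOfFin (finPermOf n π h) = π := by
  ext m
  rcases Nat.lt_or_ge m n with hm | hm
  · rw [permOfFin_apply _ hm]
    simp [finPermOf, Fin.equivSubtype]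
  · rw [(fixge_permOfFin _) m hm, h m hm]

theorem finPermOf_permOfFin {n : ℕ} (σ : Equiv.Perm (Fin n)) (h : FixGe n (permOfFin σ)) :
    finPermOf n (permOfFin σ) h = σ :=
  permOfFin_injective (permOfFin_finPermOf n (permOfFin σ) h)

def cyc (k n : ℕ) : Equiv.Perm ℕ := ((List.range' k (n - k)).map tau).prod

theorem cyc_self (n : ℕ) : cyc n n = 1 := by simp [cyc]

theorem cyc_step {k n : ℕ} (h : k < n) : cyc k n = tau k * cyc (k + 1) n := by
  have h1 : n - k = (n - (k + 1)) + 1 := by omega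
  rw [cyc, cyc, h1, List.range'_succ]
  simp

theorem cyc_apply {n : ℕ} :
    ∀ d k j, k + d = n →
      cyc k n j = if j < k then j else if j < n then j + 1 else if j = n then k else j := by
  intro d
  induction d with
  | zero =>
    intro k j hk
    have : k = n := by omega
    subst this
    rw [cyc_self]
    simp only [Perm.one_apply]
    split_ifs <;> omega
  | succ d ih =>
    intro k j hk
    rw [cyc_step (by omega), Perm.mul_apply, ih (k + 1) j (by omega), tau_apply_def]
    split_ifs <;> omega

theorem cyc_n {k n : ℕ} (hk : k ≤ n) : cyc k n n = k := by
  rw [cyc_apply (n - k) k n (by omega)]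
  split_ifs <;> omega

theorem cyc_low {k n j : ℕ} (hk : k ≤ n) (hj : j < k) : cyc k n j = j := by
  rw [cyc_apply (n - k) k j (by omega)]
  split_ifs <;> omega

theorem fixge_cyc {k n : ℕ} (hk : k ≤ n) : FixGe (n + 1) (cyc k n) := by
  intro m hm
  rw [cyc_apply (n - k) k m (by omega)]
  split_ifs <;> omega

theorem invLen_stable {n : ℕ} {π : Equiv.Perm ℕ} (h : FixGe n π) :
    invLen (n + 1) π = invLen n π := by
  rw [invLen_eq, invLen_eq]
  congr 1
  ext ⟨a, b⟩
  rw [mem_invSet, mem_invSet]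
  constructor
  · rintro ⟨ha, hb, hab, hinv⟩
    have hinv : π b < π a := hinv
    have hbn : b < n := by
      rcases Nat.lt_or_ge b n with h' | h'
      · exact h'
      · exfalso
        have hb' : b = n := by omega
        rw [hb', h n le_rfl] at hinv
        have ha' : π a < n := fixge_lt h (by omega)
        omega
    exact ⟨by omega, hbn, hab, hinv⟩
  · rintro ⟨ha, hb, hab, hinv⟩
    exact ⟨by omega, by omega, hab, hinv⟩

theorem invLen_cyc_mul {n : ℕ} {π : Equiv.Perm ℕ} (hπ : FixGe n π) :
    ∀ d k, k + d = n → invLen (n + 1) (cyc k n * π) = invLen (n + 1) π + d := by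
  intro d
  induction d with
  | zero =>
    intro k hk
    have : k = n := by omega
    subst this
    rw [cyc_self, one_mul]
    omega
  | succ d ih =>
    intro k hk
    have hk1 : k < n := by omega
    set ρ := cyc (k + 1) n * π with hρ
    have hfixρ : FixGe (n + 1) ρ := fixge_mul (fixge_cyc (by omega)) (fixge_mono (by omega) hπ)
    have hstep : cyc k n * π = tau k * ρ := by rw [hρ, ← mul_assoc, ← cyc_step hk1]
    have hv1 : ρ⁻¹ k = π⁻¹ k := by
      have h0 : ρ (π⁻¹ k) = k := by
        rw [hρ, Perm.mul_apply, (by simp : π (π⁻¹ k) = k), cyc_low (by omega) (by omega)]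
      rw [Equiv.Perm.inv_def, Equiv.symm_apply_eq]
      exact h0.symm
    have hv2 : ρ⁻¹ (k + 1) = n := by
      have h0 : ρ n = k + 1 := by
        rw [hρ, Perm.mul_apply, hπ n le_rfl, cyc_n (by omega)]
      rw [Equiv.Perm.inv_def, Equiv.symm_apply_eq]
      exact h0.symm
    have hasc : ρ⁻¹ k < ρ⁻¹ (k + 1) := by
      rw [hv1, hv2]
      exact fixge_lt (fixge_inv hπ) (by omega)
    have h1 : invLen (n + 1) (ρ⁻¹ * tau k) = invLen (n + 1) ρ⁻¹ + 1 :=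
      invLen_mul_tau (by omega) hasc
    have h2 : (tau k * ρ)⁻¹ = ρ⁻¹ * tau k := by rw [mul_inv_rev, tau_inv]
    have h3 : invLen (n + 1) (tau k * ρ) = invLen (n + 1) ρ + 1 := by
      have ha := invLen_inv (n + 1) (tau k * ρ)
        (fixge_mul (fixge_tau (by omega)) hfixρ)
      rw [h2] at ha
      rw [← ha, h1, invLen_inv (n + 1) ρ hfixρ]
    rw [hstep, h3, hρ, ih (k + 1) (by omega)]
    omega

theorem Lsucc (n : ℕ) : (n + 1) * ((n + 1) - 1) / 2 = n * (n - 1) / 2 + n := by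
  have h : n * (n - 1) + n * 2 = (n + 1) * n := by
    cases n with
    | zero => simp
    | succ m => simp only [Nat.succ_sub_one]; ring
  rw [Nat.succ_sub_one, ← h, Nat.add_mul_div_right _ _ (by norm_num : (0:ℕ) < 2)]

theorem fixge_inv_cyc_mul {n : ℕ} (π : Equiv.Perm ℕ) (h : FixGe (n + 1) π) (hπn : π n ≤ n) :
    FixGe n ((cyc (π n) n)⁻¹ * π) := by
  intro m hm
  rcases Nat.eq_or_lt_of_le hm with hmn | hmn
  · rw [Perm.mul_apply, ← hmn, Equiv.Perm.inv_def, Equiv.symm_apply_eq]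
    exact (cyc_n hπn).symm
  · rw [Perm.mul_apply, h m (by omega), (fixge_inv (fixge_cyc hπn)) m (by omega)]

theorem sum_formula {K : Type*} [CommRing K] (q : K) (n : ℕ) :
    ∑ σ : Equiv.Perm (Fin n), q ^ (n * (n - 1) / 2 - invLen n (permOfFin σ)) =
      ∏ m ∈ Finset.Icc 1 n, ∑ i ∈ Finset.range m, q ^ i := by
  induction n with
  | zero =>
    rw [show Finset.Icc 1 0 = ∅ by rfl, Finset.prod_empty]
    have h1 : ∀ σ : Equiv.Perm (Fin 0), q ^ (0 * (0 - 1) / 2 - invLen 0 (permOfFin σ)) = 1 := by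
      intro σ
      have : invLen 0 (permOfFin σ) = 0 := by
        rw [invLen]; simp
      rw [this]
      norm_num
    rw [Finset.sum_congr rfl (fun σ _ => h1 σ)]
    simp
  | succ n ih =>
    have hlt : ∀ σ : Equiv.Perm (Fin (n + 1)), permOfFin σ n ≤ n := fun σ => by
      have := fixge_lt (fixge_permOfFin σ) (show n < n + 1 by omega)
      omega
    have key : ∑ σ : Equiv.Perm (Fin (n + 1)),
        q ^ ((n + 1) * ((n + 1) - 1) / 2 - invLen (n + 1) (permOfFin σ)) =
        ∑ p : Equiv.Perm (Fin n) × Fin (n + 1),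
          q ^ ((n * (n - 1) / 2 - invLen n (permOfFin p.1)) + (p.2 : ℕ)) := by
      apply Finset.sum_nbij'
        (i := fun σ => (finPermOf n ((cyc (permOfFin σ n) n)⁻¹ * permOfFin σ)
            (fixge_inv_cyc_mul _ (fixge_permOfFin σ) (hlt σ)),
          (⟨permOfFin σ n, by have := hlt σ; omega⟩ : Fin (n + 1))))
        (j := fun p => finPermOf (n + 1) (cyc (p.2 : ℕ) n * permOfFin p.1)
          (fixge_mul (fixge_cyc (by omega)) (fixge_mono (by omega) (fixge_permOfFin p.1))))
      · intro a _; exact Finset.mem_univ _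
      · intro a _; exact Finset.mem_univ _
      · -- left inverse
        intro σ _
        apply permOfFin_injective
        rw [permOfFin_finPermOf, permOfFin_finPermOf]
        exact mul_inv_cancel_left _ _
      · -- right inverse
        rintro ⟨τ, k⟩ _
        have hval : permOfFin (finPermOf (n + 1) (cyc (k : ℕ) n * permOfFin τ)
            (fixge_mul (fixge_cyc (by omega)) (fixge_mono (by omega) (fixge_permOfFin τ)))) n
            = (k : ℕ) := by
          rw [permOfFin_finPermOf, Perm.mul_apply, (fixge_permOfFin τ) n le_rfl,
            cyc_n (by omega : (k : ℕ) ≤ n)]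
        refine Prod.ext ?_ ?_
        · apply permOfFin_injective
          rw [permOfFin_finPermOf, hval, permOfFin_finPermOf]
          exact inv_mul_cancel_left _ _
        · exact Fin.ext hval
      · -- values
        intro σ _
        have hfx : FixGe n ((cyc (permOfFin σ n) n)⁻¹ * permOfFin σ) :=
          fixge_inv_cyc_mul _ (fixge_permOfFin σ) (hlt σ)
        have hdec : permOfFin σ =
            cyc (permOfFin σ n) n * ((cyc (permOfFin σ n) n)⁻¹ * permOfFin σ) :=
          (mul_inv_cancel_left _ _).symm
        have h1 : invLen (n + 1) (permOfFin σ) =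
            invLen (n + 1) ((cyc (permOfFin σ n) n)⁻¹ * permOfFin σ) + (n - permOfFin σ n) := by
          conv_lhs => rw [hdec]
          exact invLen_cyc_mul hfx (n - permOfFin σ n) (permOfFin σ n) (by have := hlt σ; omega)
        rw [invLen_stable hfx] at h1
        simp only []
        rw [permOfFin_finPermOf]
        congr 1
        have h2 := invLen_le n ((cyc (permOfFin σ n) n)⁻¹ * permOfFin σ)
        have h3 := Lsucc n
        have h4 := hlt σ
        omega
    rw [key, Fintype.sum_prod_type]
    have hsplit : ∀ τ : Equiv.Perm (Fin n), ∑ k : Fin (n + 1),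
        q ^ ((n * (n - 1) / 2 - invLen n (permOfFin τ)) + (k : ℕ)) =
        q ^ (n * (n - 1) / 2 - invLen n (permOfFin τ)) * ∑ i ∈ Finset.range (n + 1), q ^ i := by
      intro τ
      rw [Finset.mul_sum, ← Fin.sum_univ_eq_sum_range
        (fun i => q ^ (n * (n - 1) / 2 - invLen n (permOfFin τ)) * q ^ i) (n + 1)]
      exact Finset.sum_congr rfl fun k _ => pow_add q _ _
    rw [Finset.sum_congr rfl (fun τ _ => hsplit τ), ← Finset.sum_mul, ih,
      Finset.prod_Icc_succ_top (by omega : 1 ≤ n + 1)]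

end HA

namespace HA
open Equiv Finset

theorem invLen_tau_mul {n i : ℕ} (hi : i + 1 < n) {π : Equiv.Perm ℕ} (hfix : FixGe n π)
    (hasc : π⁻¹ i < π⁻¹ (i + 1)) : invLen n (tau i * π) = invLen n π + 1 := by
  have h1 : (tau i * π)⁻¹ = π⁻¹ * tau i := by rw [mul_inv_rev, tau_inv]
  have h2 := invLen_mul_tau (π := π⁻¹) hi hasc
  calc invLen n (tau i * π) = invLen n (π⁻¹ * tau i) := by
        rw [← h1, invLen_inv _ _ (fixge_mul (fixge_tau hi) hfix)]
    _ = invLen n π⁻¹ + 1 := h2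
    _ = invLen n π + 1 := by rw [invLen_inv _ _ hfix]

theorem permOfFin_swap {n i : ℕ} (hi : i + 1 < n) :
    permOfFin (Equiv.swap (⟨i, by omega⟩ : Fin n) ⟨i + 1, hi⟩) = tau i := by
  ext m
  rcases Nat.lt_or_ge m n with hm | hm
  · rw [permOfFin_apply _ hm, tau_apply_def]
    by_cases h1 : m = i
    · rw [if_pos h1]
      have e : (⟨m, hm⟩ : Fin n) = ⟨i, by omega⟩ := Fin.ext h1
      rw [e, Equiv.swap_apply_left]
    · by_cases h2 : m = i + 1
      · rw [if_neg h1, if_pos h2]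
        have e : (⟨m, hm⟩ : Fin n) = ⟨i + 1, hi⟩ := Fin.ext h2
        rw [e, Equiv.swap_apply_right]
      · rw [if_neg h1, if_neg h2, Equiv.swap_apply_of_ne_of_ne]
        · intro hc; exact h1 (congrArg Fin.val hc)
        · intro hc; exact h2 (congrArg Fin.val hc)
  · rw [(fixge_permOfFin _) m hm, (fixge_tau hi) m hm]

theorem pair_term_right {K H : Type*} [Field K] [Ring H] [Algebra K H] (q : K) (A B : H)
    (ℓ L : ℕ) (h : ℓ + 1 ≤ L) :
    ((-1 : K) ^ ℓ * q ^ (L - ℓ)) • A + ((-1 : K) ^ (ℓ + 1) * q ^ (L - (ℓ + 1))) • (A * B) =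
      ((-1 : K) ^ (ℓ + 1) * q ^ (L - (ℓ + 1))) • (A * (B - algebraMap K H q)) := by
  have e1 : L - ℓ = (L - (ℓ + 1)) + 1 := by omega
  have hA : A * algebraMap K H q = q • A := by
    rw [← Algebra.commutes, ← Algebra.smul_def]
  have e2 : (-1 : K) ^ ℓ * q ^ (L - ℓ) = -(((-1 : K) ^ (ℓ + 1) * q ^ (L - (ℓ + 1))) * q) := by
    rw [e1, pow_succ, pow_succ]; ring
  rw [mul_sub, smul_sub, hA, smul_smul, e2, neg_smul]
  abel

theorem pair_term_left {K H : Type*} [Field K] [Ring H] [Algebra K H] (q : K) (A B : H)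
    (ℓ L : ℕ) (h : ℓ + 1 ≤ L) :
    ((-1 : K) ^ ℓ * q ^ (L - ℓ)) • A + ((-1 : K) ^ (ℓ + 1) * q ^ (L - (ℓ + 1))) • (B * A) =
      ((-1 : K) ^ (ℓ + 1) * q ^ (L - (ℓ + 1))) • ((B - algebraMap K H q) * A) := by
  have e1 : L - ℓ = (L - (ℓ + 1)) + 1 := by omega
  have hA : algebraMap K H q * A = q • A := by rw [← Algebra.smul_def]
  have e2 : (-1 : K) ^ ℓ * q ^ (L - ℓ) = -(((-1 : K) ^ (ℓ + 1) * q ^ (L - (ℓ + 1))) * q) := by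
    rw [e1, pow_succ, pow_succ]; ring
  rw [sub_mul, smul_sub, hA, smul_smul, e2, neg_smul]
  abel

theorem factor_left {K H : Type*} [Field K] [Ring H] [Algebra K H] (q : K) (n : ℕ)
    (T : Equiv.Perm ℕ → H)
    (hTmul : ∀ π σ : Equiv.Perm ℕ, (∀ m, n ≤ m → π m = m) → (∀ m, n ≤ m → σ m = m) →
      invLen n (π * σ) = invLen n π + invLen n σ → T (π * σ) = T π * T σ)
    (i : ℕ) (hi : i + 1 < n) :
    ∃ z : H, (∑ σ : Equiv.Perm (Fin n),
        ((-1 : K) ^ invLen n (permOfFin σ) * q ^ (n * (n - 1) / 2 - invLen n (permOfFin σ))) •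
          T (permOfFin σ)) = z * (T (tau i) - algebraMap K H q) := by
  classical
  set L := n * (n - 1) / 2 with hL
  set s : Equiv.Perm (Fin n) := Equiv.swap (⟨i, by omega⟩ : Fin n) ⟨i + 1, hi⟩ with hsdef
  have hs : permOfFin s = tau i := permOfFin_swap hi
  set f : Equiv.Perm (Fin n) → H := fun σ =>
    ((-1 : K) ^ invLen n (permOfFin σ) * q ^ (L - invLen n (permOfFin σ))) • T (permOfFin σ)
    with hf
  set p : Equiv.Perm (Fin n) → Prop := fun σ => permOfFin σ i < permOfFin σ (i + 1) with hp
  have hmuls : ∀ σ : Equiv.Perm (Fin n), permOfFin (σ * s) = permOfFin σ * tau i := by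
    intro σ; rw [permOfFin_mul, hs]
  have hswap : ∀ σ : Equiv.Perm (Fin n),
      permOfFin (σ * s) i = permOfFin σ (i + 1) ∧
      permOfFin (σ * s) (i + 1) = permOfFin σ i := by
    intro σ
    rw [hmuls σ]
    constructor
    · rw [Equiv.Perm.mul_apply, tau_left]
    · rw [Equiv.Perm.mul_apply, tau_right]
  have hne : ∀ σ : Equiv.Perm (Fin n), permOfFin σ i ≠ permOfFin σ (i + 1) := fun σ h =>
    (by omega : i ≠ i + 1) ((permOfFin σ).injective h)
  have hss : ∀ σ : Equiv.Perm (Fin n), σ * s * s = σ := by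
    intro σ; rw [mul_assoc, hsdef, Equiv.swap_mul_self, mul_one]
  have split := (Finset.sum_filter_add_sum_filter_not Finset.univ p f).symm
  have reindex : ∑ σ ∈ Finset.univ.filter (fun σ => ¬ p σ), f σ =
      ∑ σ ∈ Finset.univ.filter p, f (σ * s) := by
    apply Finset.sum_nbij' (i := fun σ => σ * s) (j := fun σ => σ * s)
    · intro σ hσ
      rw [Finset.mem_filter] at hσ ⊢
      refine ⟨Finset.mem_univ _, ?_⟩
      rw [hp]
      have h1 := (hswap σ).1
      have h2 := (hswap σ).2
      have h3 : ¬ (permOfFin σ i < permOfFin σ (i + 1)) := hσ.2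
      have h4 := hne σ
      simp only []
      omega
    · intro σ hσ
      rw [Finset.mem_filter] at hσ ⊢
      refine ⟨Finset.mem_univ _, ?_⟩
      have h1 := (hswap σ).1
      have h2 := (hswap σ).2
      have h3 : permOfFin σ i < permOfFin σ (i + 1) := hσ.2
      simp only [hp]
      omega
    · intro σ _; exact hss σ
    · intro σ _; exact hss σ
    · intro σ _; rw [hss σ]
  have combine : ∑ σ : Equiv.Perm (Fin n), f σ =
      ∑ σ ∈ Finset.univ.filter p, (f σ + f (σ * s)) := by
    rw [Finset.sum_add_distrib, ← reindex, ← split]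
  have term : ∀ σ ∈ Finset.univ.filter p, f σ + f (σ * s) =
      ((-1 : K) ^ (invLen n (permOfFin σ) + 1) * q ^ (L - (invLen n (permOfFin σ) + 1))) •
        (T (permOfFin σ) * (T (tau i) - algebraMap K H q)) := by
    intro σ hσ
    rw [Finset.mem_filter] at hσ
    have hasc : permOfFin σ i < permOfFin σ (i + 1) := hσ.2
    have hlen : invLen n (permOfFin σ * tau i) = invLen n (permOfFin σ) + 1 :=
      invLen_mul_tau hi hasc
    have hT : T (permOfFin σ * tau i) = T (permOfFin σ) * T (tau i) := by
      apply hTmul _ _ (fixge_permOfFin σ) (fixge_tau hi)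
      rw [hlen, invLen_tau hi]
    have hLb : invLen n (permOfFin σ) + 1 ≤ L := by
      have := invLen_le n (permOfFin σ * tau i)
      rw [hlen] at this
      exact this
    rw [hf]
    simp only []
    rw [hmuls σ, hlen, hT]
    exact pair_term_right q _ _ _ _ hLb
  rw [combine, Finset.sum_congr rfl term]
  refine ⟨∑ σ ∈ Finset.univ.filter p,
    ((-1 : K) ^ (invLen n (permOfFin σ) + 1) * q ^ (L - (invLen n (permOfFin σ) + 1))) •
      T (permOfFin σ), ?_⟩
  rw [Finset.sum_mul]
  exact Finset.sum_congr rfl fun σ _ => (smul_mul_assoc _ _ _).symm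

theorem factor_right {K H : Type*} [Field K] [Ring H] [Algebra K H] (q : K) (n : ℕ)
    (T : Equiv.Perm ℕ → H)
    (hTmul : ∀ π σ : Equiv.Perm ℕ, (∀ m, n ≤ m → π m = m) → (∀ m, n ≤ m → σ m = m) →
      invLen n (π * σ) = invLen n π + invLen n σ → T (π * σ) = T π * T σ)
    (i : ℕ) (hi : i + 1 < n) :
    ∃ z : H, (∑ σ : Equiv.Perm (Fin n),
        ((-1 : K) ^ invLen n (permOfFin σ) * q ^ (n * (n - 1) / 2 - invLen n (permOfFin σ))) •
          T (permOfFin σ)) = (T (tau i) - algebraMap K H q) * z := by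
  classical
  set L := n * (n - 1) / 2 with hL
  set s : Equiv.Perm (Fin n) := Equiv.swap (⟨i, by omega⟩ : Fin n) ⟨i + 1, hi⟩ with hsdef
  have hs : permOfFin s = tau i := permOfFin_swap hi
  set f : Equiv.Perm (Fin n) → H := fun σ =>
    ((-1 : K) ^ invLen n (permOfFin σ) * q ^ (L - invLen n (permOfFin σ))) • T (permOfFin σ)
    with hf
  set p : Equiv.Perm (Fin n) → Prop :=
    fun σ => (permOfFin σ)⁻¹ i < (permOfFin σ)⁻¹ (i + 1) with hp
  have hmuls : ∀ σ : Equiv.Perm (Fin n), permOfFin (s * σ) = tau i * permOfFin σ := by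
    intro σ; rw [permOfFin_mul, hs]
  have hinvv : ∀ σ : Equiv.Perm (Fin n),
      (permOfFin (s * σ))⁻¹ i = (permOfFin σ)⁻¹ (i + 1) ∧
      (permOfFin (s * σ))⁻¹ (i + 1) = (permOfFin σ)⁻¹ i := by
    intro σ
    rw [hmuls σ, mul_inv_rev, tau_inv]
    constructor
    · rw [Equiv.Perm.mul_apply, tau_left]
    · rw [Equiv.Perm.mul_apply, tau_right]
  have hne : ∀ σ : Equiv.Perm (Fin n), (permOfFin σ)⁻¹ i ≠ (permOfFin σ)⁻¹ (i + 1) :=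
    fun σ h => (by omega : i ≠ i + 1) ((permOfFin σ)⁻¹.injective h)
  have hss : ∀ σ : Equiv.Perm (Fin n), s * (s * σ) = σ := by
    intro σ; rw [← mul_assoc, hsdef, Equiv.swap_mul_self, one_mul]
  have split := (Finset.sum_filter_add_sum_filter_not Finset.univ p f).symm
  have reindex : ∑ σ ∈ Finset.univ.filter (fun σ => ¬ p σ), f σ =
      ∑ σ ∈ Finset.univ.filter p, f (s * σ) := by
    apply Finset.sum_nbij' (i := fun σ => s * σ) (j := fun σ => s * σ)
    · intro σ hσ
      rw [Finset.mem_filter] at hσ ⊢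
      refine ⟨Finset.mem_univ _, ?_⟩
      have h1 := (hinvv σ).1
      have h2 := (hinvv σ).2
      have h3 : ¬ ((permOfFin σ)⁻¹ i < (permOfFin σ)⁻¹ (i + 1)) := hσ.2
      have h4 := hne σ
      simp only [hp]
      omega
    · intro σ hσ
      rw [Finset.mem_filter] at hσ ⊢
      refine ⟨Finset.mem_univ _, ?_⟩
      have h1 := (hinvv σ).1
      have h2 := (hinvv σ).2
      have h3 : (permOfFin σ)⁻¹ i < (permOfFin σ)⁻¹ (i + 1) := hσ.2
      simp only [hp]
      omega
    · intro σ _; exact hss σ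
    · intro σ _; exact hss σ
    · intro σ _; rw [hss σ]
  have combine : ∑ σ : Equiv.Perm (Fin n), f σ =
      ∑ σ ∈ Finset.univ.filter p, (f σ + f (s * σ)) := by
    rw [Finset.sum_add_distrib, ← reindex, ← split]
  have term : ∀ σ ∈ Finset.univ.filter p, f σ + f (s * σ) =
      ((-1 : K) ^ (invLen n (permOfFin σ) + 1) * q ^ (L - (invLen n (permOfFin σ) + 1))) •
        ((T (tau i) - algebraMap K H q) * T (permOfFin σ)) := by
    intro σ hσ
    rw [Finset.mem_filter] at hσ
    have hasc : (permOfFin σ)⁻¹ i < (permOfFin σ)⁻¹ (i + 1) := hσ.2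
    have hlen : invLen n (tau i * permOfFin σ) = invLen n (permOfFin σ) + 1 :=
      invLen_tau_mul hi (fixge_permOfFin σ) hasc
    have hT : T (tau i * permOfFin σ) = T (tau i) * T (permOfFin σ) := by
      apply hTmul _ _ (fixge_tau hi) (fixge_permOfFin σ)
      rw [hlen, invLen_tau hi]
      omega
    have hLb : invLen n (permOfFin σ) + 1 ≤ L := by
      have := invLen_le n (tau i * permOfFin σ)
      rw [hlen] at this
      exact this
    rw [hf]
    simp only []
    rw [hmuls σ, hlen, hT]
    exact pair_term_left q _ _ _ _ hLb
  rw [combine, Finset.sum_congr rfl term]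
  refine ⟨∑ σ ∈ Finset.univ.filter p,
    ((-1 : K) ^ (invLen n (permOfFin σ) + 1) * q ^ (L - (invLen n (permOfFin σ) + 1))) •
      T (permOfFin σ), ?_⟩
  rw [Finset.mul_sum]
  exact Finset.sum_congr rfl fun σ _ => (mul_smul_comm _ _ _).symm

end HA

/-- Let `M` be a left module over the Hecke algebra `H_n(q)`, with
`Σ(M) = ∑_{i} {u : T_i u = q u}` and `Υ(M) = ⋂_i (T_i − q)M`.  Then `y_n M ⊆ Υ(M)`
and `y_n Σ(M) = 0`; moreover if `[n]!_q ≠ 0` then the action of `y_n` induces a linear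
bijection `M/Σ(M) → Υ(M)` and `M = Υ(M) ⊕ Σ(M)`. -/
theorem stmt4 {K H M : Type*} [Field K] [Ring H] [Algebra K H]
    [AddCommGroup M] [Module K M] [Module H M] [IsScalarTower K H M] [SMulCommClass K H M]
    (q : K) (n : ℕ)
    (T : Equiv.Perm ℕ → H)
    (hT1 : T 1 = 1)
    (hTq : ∀ i : ℕ, i + 1 < n → (T (tau i) - algebraMap K H q) * (T (tau i) + 1) = 0)
    (hTmul : ∀ π σ : Equiv.Perm ℕ, (∀ m, n ≤ m → π m = m) → (∀ m, n ≤ m → σ m = m) →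
      invLen n (π * σ) = invLen n π + invLen n σ → T (π * σ) = T π * T σ)
    (y : H)
    (hy : y = ∑ σ : Equiv.Perm (Fin n),
      ((-1 : K) ^ invLen n (permOfFin σ) * q ^ (n * (n - 1) / 2 - invLen n (permOfFin σ))) •
        T (permOfFin σ))
    (Sig Ups : Submodule K M)
    (hSig : Sig = ⨆ i ∈ Finset.range (n - 1),
      LinearMap.ker (hSmulLin (K := K) (M := M) (T (tau i)) - q • LinearMap.id))
    (hUps : Ups = ⨅ i ∈ Finset.range (n - 1),
      LinearMap.range (hSmulLin (K := K) (M := M) (T (tau i)) - q • LinearMap.id)) :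
    (∀ u : M, y • u ∈ Ups) ∧
    (∀ u ∈ Sig, y • u = (0 : M)) ∧
    ((∏ m ∈ Finset.Icc 1 n, ∑ i ∈ Finset.range m, q ^ i) ≠ 0 →
      (∀ u : M, y • u = (0 : M) → u ∈ Sig) ∧
      (∀ w ∈ Ups, ∃ u : M, y • u = w) ∧
      IsCompl Ups Sig) := by
  classical
  have hQs : ∀ m : M, (algebraMap K H q) • m = q • m := fun m => algebraMap_smul H q m
  have hmapply : ∀ (i : ℕ) (m : M),
      ((hSmulLin (K := K) (M := M) (T (tau i)) - q • LinearMap.id : M →ₗ[K] M)) m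
        = T (tau i) • m - q • m := by
    intro i m
    rw [LinearMap.sub_apply, LinearMap.smul_apply, LinearMap.id_apply]
    rfl
  have hrange : ∀ i : ℕ, i ∈ Finset.range (n - 1) ↔ i + 1 < n := by
    intro i; rw [Finset.mem_range]; omega
  have hUpsIff : ∀ w : M, w ∈ Ups ↔
      ∀ i, i ∈ Finset.range (n - 1) → ∃ m : M, T (tau i) • m - q • m = w := by
    intro w
    rw [hUps]
    simp only [Submodule.mem_iInf, LinearMap.mem_range]
    constructor
    · intro h i hi; obtain ⟨m, hm⟩ := h i hi; exact ⟨m, by rw [← hmapply]; exact hm⟩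
    · intro h i hi; obtain ⟨m, hm⟩ := h i hi; exact ⟨m, by rw [hmapply]; exact hm⟩
  have part1 : ∀ u : M, y • u ∈ Ups := by
    intro u
    rw [hUpsIff]
    intro i hi
    obtain ⟨z, hz⟩ := HA.factor_right q n T hTmul i ((hrange i).1 hi)
    refine ⟨z • u, ?_⟩
    rw [hy, hz, mul_smul, sub_smul, hQs]
  have part2' : ∀ i, i + 1 < n → ∀ u : M, T (tau i) • u = q • u → y • u = 0 := by
    intro i hi u hu
    obtain ⟨z, hz⟩ := HA.factor_left q n T hTmul i hi
    rw [hy, hz, mul_smul, sub_smul, hQs, hu, sub_self, smul_zero]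
  have part2 : ∀ u ∈ Sig, y • u = (0 : M) := by
    intro u hu
    have hle : Sig ≤ LinearMap.ker (hSmulLin (K := K) (M := M) y) := by
      rw [hSig]
      refine iSup₂_le fun i hi => ?_
      intro v hv
      rw [LinearMap.mem_ker, hmapply] at hv
      rw [LinearMap.mem_ker]
      show y • v = 0
      exact part2' i ((hrange i).1 hi) v (by rw [sub_eq_zero] at hv; exact hv)
    exact hle hu
  refine ⟨part1, part2, ?_⟩
  intro hc
  have hformula := HA.sum_formula q n
  have hneg1 : ∀ ℓ : ℕ, (-1 : K) ^ ℓ * (-1 : K) ^ ℓ = 1 := fun ℓ => by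
    rw [← mul_pow]; norm_num
  have hUpsNeg : ∀ w ∈ Ups, ∀ i, i + 1 < n → T (tau i) • w = -w := by
    intro w hw i hi
    obtain ⟨m, hm⟩ := (hUpsIff w).1 hw i ((hrange i).2 hi)
    have hw' : w = (T (tau i) - algebraMap K H q) • m := by
      rw [sub_smul, hQs]; exact hm.symm
    have hrel2 : (T (tau i) + 1) * (T (tau i) - algebraMap K H q) = 0 := by
      have c1 : Commute (T (tau i) - algebraMap K H q) (T (tau i) + 1) := by
        refine Commute.sub_left ?_ ?_
        · exact Commute.add_right (Commute.refl _) (Commute.one_right _)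
        · exact Commute.add_right (Algebra.commutes q _) (Commute.one_right _)
      exact (c1.eq.symm).trans (hTq i hi)
    have h0 : (T (tau i) + 1) • w = 0 := by
      rw [hw', ← mul_smul, hrel2, zero_smul]
    rw [add_smul, one_smul] at h0
    exact eq_neg_of_add_eq_zero_left h0
  have scal : ∀ w : M, (∀ i, i + 1 < n → T (tau i) • w = -w) →
      y • w = (∏ m ∈ Finset.Icc 1 n, ∑ i ∈ Finset.range m, q ^ i) • w := by
    intro w hw
    have keyS : ∀ m : ℕ, ∀ π : Equiv.Perm ℕ, HA.FixGe n π → invLen n π = m →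
        T π • w = ((-1 : K) ^ m) • w := by
      intro m
      induction m using Nat.strong_induction_on with
      | _ m ihm =>
        intro π hfix hlen
        by_cases hπ : π = 1
        · subst hπ
          rw [HA.invLen_one] at hlen
          rw [hT1, one_smul, ← hlen, pow_zero, one_smul]
        · obtain ⟨i, hi, hdesc⟩ := HA.exists_desc hfix hπ
          have hfix' : HA.FixGe n (π * tau i) := HA.fixge_mul hfix (HA.fixge_tau hi)
          have hlen' : invLen n π = invLen n (π * tau i) + 1 := HA.invLen_desc hfix hi hdesc
          have hmul : T π = T (π * tau i) * T (tau i) := by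
            have e : π * tau i * tau i = π := by rw [mul_assoc, HA.tau_mul_self, mul_one]
            conv_lhs => rw [← e]
            apply hTmul _ _ hfix' (HA.fixge_tau hi)
            rw [HA.invLen_tau hi, e]
            omega
          have hstep := ihm (invLen n (π * tau i)) (by omega) (π * tau i) hfix' rfl
          have hm : m = invLen n (π * tau i) + 1 := by omega
          rw [hmul, mul_smul, hw i hi, smul_neg, hstep, hm, pow_succ, mul_smul,
            neg_one_smul, smul_neg]
    rw [hy, Finset.sum_smul]
    have hterm : ∀ σ : Equiv.Perm (Fin n),
        (((-1 : K) ^ invLen n (permOfFin σ) *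
          q ^ (n * (n - 1) / 2 - invLen n (permOfFin σ))) • T (permOfFin σ)) • w =
        (q ^ (n * (n - 1) / 2 - invLen n (permOfFin σ))) • w := by
      intro σ
      rw [smul_assoc, keyS _ _ (HA.fixge_permOfFin σ) rfl, smul_smul, mul_right_comm,
        hneg1, one_mul]
    rw [Finset.sum_congr rfl (fun σ _ => hterm σ), ← Finset.sum_smul, hformula]
  have scalUps : ∀ w ∈ Ups,
      y • w = (∏ m ∈ Finset.Icc 1 n, ∑ i ∈ Finset.range m, q ^ i) • w :=
    fun w hw => scal w (hUpsNeg w hw)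
  have surj : ∀ w ∈ Ups, ∃ u : M, y • u = w := by
    intro w hw
    refine ⟨(∏ m ∈ Finset.Icc 1 n, ∑ i ∈ Finset.range m, q ^ i)⁻¹ • w, ?_⟩
    have hcomm := smul_comm ((∏ m ∈ Finset.Icc 1 n, ∑ i ∈ Finset.range m, q ^ i)⁻¹) y w
    rw [← hcomm, scalUps w hw, inv_smul_smul₀ hc]
  -- the right ideal generated by the elements T i + 1
  set P : H → Prop :=
    fun x => ∃ b : ℕ → H, x = ∑ i ∈ Finset.range (n - 1), (T (tau i) + 1) * b i with hP
  have P0 : P 0 := ⟨0, by simp⟩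
  have Padd : ∀ x₁ x₂, P x₁ → P x₂ → P (x₁ + x₂) := by
    rintro x₁ x₂ ⟨b1, rfl⟩ ⟨b2, rfl⟩
    exact ⟨fun i => b1 i + b2 i, by
      rw [← Finset.sum_add_distrib]
      exact Finset.sum_congr rfl fun i _ => (mul_add _ _ _).symm⟩
  have Psmul : ∀ (a : K) x, P x → P (a • x) := by
    rintro a x ⟨b, rfl⟩
    exact ⟨fun i => a • b i, by
      rw [Finset.smul_sum]
      exact Finset.sum_congr rfl fun i _ => (mul_smul_comm _ _ _).symm⟩
  have Pmul : ∀ x (h : H), P x → P (x * h) := by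
    rintro x h ⟨b, rfl⟩
    exact ⟨fun i => b i * h, by
      rw [Finset.sum_mul]
      exact Finset.sum_congr rfl fun i _ => mul_assoc _ _ _⟩
  have Pgen : ∀ i, i + 1 < n → ∀ b : H, P ((T (tau i) + 1) * b) := by
    intro i hi b
    refine ⟨fun j => if j = i then b else 0, ?_⟩
    have hite : ∀ j, (T (tau j) + 1) * (if j = i then b else 0) =
        if j = i then (T (tau i) + 1) * b else 0 := by
      intro j
      split_ifs with h
      · rw [h]
      · rw [mul_zero]
    rw [Finset.sum_congr rfl (fun j _ => hite j), Finset.sum_ite_eq'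
      (Finset.range (n - 1)) i (fun _ => (T (tau i) + 1) * b), if_pos ((hrange i).2 hi)]
  have key2 : ∀ m : ℕ, ∀ π : Equiv.Perm ℕ, HA.FixGe n π → invLen n π = m →
      ∃ j : H, P j ∧ T π = ((-1 : K) ^ m) • 1 + j := by
    intro m
    induction m using Nat.strong_induction_on with
    | _ m ihm =>
      intro π hfix hlen
      by_cases hπ : π = 1
      · subst hπ
        rw [HA.invLen_one] at hlen
        exact ⟨0, P0, by rw [hT1, ← hlen, pow_zero, one_smul, add_zero]⟩
      · obtain ⟨i, hi, hdesc⟩ := HA.exists_desc hfix hπ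
        have hfix' : HA.FixGe n (π * tau i) := HA.fixge_mul hfix (HA.fixge_tau hi)
        have hlen' : invLen n π = invLen n (π * tau i) + 1 := HA.invLen_desc hfix hi hdesc
        have hmul : T π = T (π * tau i) * T (tau i) := by
          have e : π * tau i * tau i = π := by rw [mul_assoc, HA.tau_mul_self, mul_one]
          conv_lhs => rw [← e]
          apply hTmul _ _ hfix' (HA.fixge_tau hi)
          rw [HA.invLen_tau hi, e]
          omega
        obtain ⟨j', hPj', hTj'⟩ := ihm (invLen n (π * tau i)) (by omega) _ hfix' rfl
        refine ⟨((-1 : K) ^ invLen n (π * tau i)) • ((T (tau i) + 1) * 1) + j' * T (tau i),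
          Padd _ _ (Psmul _ _ (Pgen i hi 1)) (Pmul _ _ hPj'), ?_⟩
        rw [hmul, hTj', add_mul, smul_mul_assoc, one_mul, mul_one]
        have hm : m = invLen n (π * tau i) + 1 := by omega
        rw [hm, pow_succ]
        have hre : ((-1 : K) ^ invLen n (π * tau i) * -1) • (1 : H) +
            ((-1 : K) ^ invLen n (π * tau i)) • (T (tau i) + 1) =
            ((-1 : K) ^ invLen n (π * tau i)) • T (tau i) := by
          rw [smul_add, mul_smul, neg_one_smul, smul_neg,
            add_comm (((-1 : K) ^ invLen n (π * tau i)) • T (tau i)), neg_add_cancel_left]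
        rw [← hre, add_assoc]
  have kerSig : ∀ i, i + 1 < n →
      LinearMap.ker (hSmulLin (K := K) (M := M) (T (tau i)) - q • LinearMap.id) ≤ Sig := by
    intro i hi v hv
    rw [hSig]
    exact Submodule.mem_iSup_of_mem i
      (Submodule.mem_iSup_of_mem (Finset.mem_range.2 (by omega)) hv)
  have PSig : ∀ x : H, P x → ∀ u : M, x • u ∈ Sig := by
    rintro x ⟨b, rfl⟩ u
    rw [Finset.sum_smul]
    apply Submodule.sum_mem
    intro i hi
    have hi' : i + 1 < n := (hrange i).1 hi
    apply kerSig i hi'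
    rw [LinearMap.mem_ker, hmapply]
    have heq : T (tau i) • (((T (tau i) + 1) * b i) • u) - q • (((T (tau i) + 1) * b i) • u)
        = ((T (tau i) - algebraMap K H q) * ((T (tau i) + 1) * b i)) • u := by
      conv_rhs => rw [mul_smul, sub_smul, hQs]
    rw [heq, ← mul_assoc, hTq i hi', zero_mul, zero_smul]
  have ydec : ∃ j : H, P j ∧
      y = (∏ m ∈ Finset.Icc 1 n, ∑ i ∈ Finset.range m, q ^ i) • (1 : H) + j := by
    choose jf hjf using fun σ : Equiv.Perm (Fin n) =>
      key2 (invLen n (permOfFin σ)) (permOfFin σ) (HA.fixge_permOfFin σ) rfl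
    refine ⟨∑ σ : Equiv.Perm (Fin n),
      ((-1 : K) ^ invLen n (permOfFin σ) *
        q ^ (n * (n - 1) / 2 - invLen n (permOfFin σ))) • jf σ,
      Finset.sum_induction _ P Padd P0 (fun σ _ => Psmul _ _ (hjf σ).1), ?_⟩
    have hterm : ∀ σ : Equiv.Perm (Fin n),
        ((-1 : K) ^ invLen n (permOfFin σ) *
          q ^ (n * (n - 1) / 2 - invLen n (permOfFin σ))) • T (permOfFin σ) =
        (q ^ (n * (n - 1) / 2 - invLen n (permOfFin σ))) • (1 : H) +
        ((-1 : K) ^ invLen n (permOfFin σ) *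
          q ^ (n * (n - 1) / 2 - invLen n (permOfFin σ))) • jf σ := by
      intro σ
      rw [(hjf σ).2, smul_add, smul_smul, mul_right_comm, hneg1, one_mul]
    rw [hy, Finset.sum_congr rfl (fun σ _ => hterm σ), Finset.sum_add_distrib,
      ← Finset.sum_smul, hformula]
  obtain ⟨j0, hPj0, hydec⟩ := ydec
  have kerSub : ∀ u : M, y • u = (0 : M) → u ∈ Sig := by
    intro u hu
    have h1 : (∏ m ∈ Finset.Icc 1 n, ∑ i ∈ Finset.range m, q ^ i) • u + j0 • u = 0 := by
      have : y • u = (∏ m ∈ Finset.Icc 1 n, ∑ i ∈ Finset.range m, q ^ i) • u + j0 • u := by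
        rw [hydec, add_smul, smul_assoc, one_smul]
      rw [← this, hu]
    have h2 : (∏ m ∈ Finset.Icc 1 n, ∑ i ∈ Finset.range m, q ^ i) • u = -(j0 • u) :=
      eq_neg_of_add_eq_zero_left h1
    have h3 : (∏ m ∈ Finset.Icc 1 n, ∑ i ∈ Finset.range m, q ^ i) • u ∈ Sig :=
      h2 ▸ Submodule.neg_mem _ (PSig j0 hPj0 u)
    have h4 : u = (∏ m ∈ Finset.Icc 1 n, ∑ i ∈ Finset.range m, q ^ i)⁻¹ •
        ((∏ m ∈ Finset.Icc 1 n, ∑ i ∈ Finset.range m, q ^ i) • u) :=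
      (inv_smul_smul₀ hc u).symm
    rw [h4]
    exact Submodule.smul_mem _ _ h3
  refine ⟨kerSub, surj, ?_⟩
  constructor
  · rw [Submodule.disjoint_def]
    intro x hxU hxS
    have h1 : (∏ m ∈ Finset.Icc 1 n, ∑ i ∈ Finset.range m, q ^ i) • x = 0 := by
      rw [← scalUps x hxU]
      exact part2 x hxS
    have := congrArg (fun z : M =>
      (∏ m ∈ Finset.Icc 1 n, ∑ i ∈ Finset.range m, q ^ i)⁻¹ • z) h1
    simpa [inv_smul_smul₀ hc] using this
  · rw [codisjoint_iff, Submodule.eq_top_iff']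
    intro u
    have ha : (∏ m ∈ Finset.Icc 1 n, ∑ i ∈ Finset.range m, q ^ i)⁻¹ • (y • u) ∈ Ups :=
      Submodule.smul_mem _ _ (part1 u)
    have hb : u - (∏ m ∈ Finset.Icc 1 n, ∑ i ∈ Finset.range m, q ^ i)⁻¹ • (y • u) ∈ Sig := by
      apply kerSub
      rw [smul_sub]
      have h5 : y • ((∏ m ∈ Finset.Icc 1 n, ∑ i ∈ Finset.range m, q ^ i)⁻¹ • (y • u)) =
          (∏ m ∈ Finset.Icc 1 n, ∑ i ∈ Finset.range m, q ^ i)⁻¹ • (y • (y • u)) :=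
        (smul_comm _ _ _).symm
      rw [h5, scalUps (y • u) (part1 u), inv_smul_smul₀ hc, sub_self]
    have hsum : u = (∏ m ∈ Finset.Icc 1 n, ∑ i ∈ Finset.range m, q ^ i)⁻¹ • (y • u) +
        (u - (∏ m ∈ Finset.Icc 1 n, ∑ i ∈ Finset.range m, q ^ i)⁻¹ • (y • u)) := by
      abel
    rw [hsum]
    exact Submodule.add_mem_sup ha hb
end

section
/- In the Hecke algebra H_{n+1}(q), the partial antisymmetrizer satisfies the inductive identity y_{n+1/k,n+1−k} = q^k · y_{n/k,n−k} + (−1)^{n+1−k} · y_{n/k−1,n+1−k} · T_c, where c is the cycle (n+1)↷k, for 1 ≤ k ≤ n. -/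
/-- The cycle `i ↷ j`: for `i < j` it is `τ_i τ_{i+1} ⋯ τ_{j-1}`; for `i > j` it is
`τ_{i-1} ⋯ τ_{j+1} τ_j`; for `i = j` the identity. -/
def cyc (i j : ℕ) : Equiv.Perm ℕ :=
  if i ≤ j then ((List.range (j - i)).map (fun t => tau (i + t))).prod
  else ((List.range (i - j)).map (fun t => tau (i - 1 - t))).prod

/-- `σ` is a distinguished left coset representative of the Young subgroup `S_{a,b}`
of `S_{a+b}`: it is increasing on the blocks `{0,…,a-1}` and `{a,…,a+b-1}`. -/
def isDist (a b : ℕ) (σ : Equiv.Perm ℕ) : Prop :=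
  ∀ i : ℕ, i + 1 < a + b → i + 1 ≠ a → σ i < σ (i + 1)

open Classical in
/-- The partial antisymmetrizer `y_{a+b/a,b} = y(S_{a+b}/S_{a,b})
  = ∑_{d ∈ D(S_{a+b}/S_{a,b})} (−1)^{ℓ(d)} q^{ab − ℓ(d)} T_d`. -/
noncomputable def yQ {K H : Type*} [Field K] [Ring H] [Algebra K H]
    (T : Equiv.Perm ℕ → H) (q : K) (a b : ℕ) : H :=
  ∑ σ : Equiv.Perm (Fin (a + b)),
    if isDist a b (permOfFin σ) then
      ((-1 : K) ^ invLen (a + b) (permOfFin σ) * q ^ (a * b - invLen (a + b) (permOfFin σ))) •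
        T (permOfFin σ)
    else 0

-- basics about tau
lemma tau_apply_left (i : ℕ) : tau i i = i + 1 := Equiv.swap_apply_left i (i+1)
lemma tau_apply_right (i : ℕ) : tau i (i+1) = i := Equiv.swap_apply_right i (i+1)
lemma tau_apply_of_ne (i x : ℕ) (h1 : x ≠ i) (h2 : x ≠ i + 1) : tau i x = x :=
  Equiv.swap_apply_of_ne_of_ne h1 h2

lemma permOfFin_apply_lt {n : ℕ} (σ : Equiv.Perm (Fin n)) (i : ℕ) (h : i < n) :
    permOfFin σ i = (σ ⟨i, h⟩ : ℕ) := by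
  unfold permOfFin
  rw [Equiv.Perm.extendDomain_apply_subtype σ Fin.equivSubtype h]
  rfl

lemma permOfFin_apply_ge {n : ℕ} (σ : Equiv.Perm (Fin n)) (i : ℕ) (h : n ≤ i) :
    permOfFin σ i = i := by
  unfold permOfFin
  exact Equiv.Perm.extendDomain_apply_not_subtype σ Fin.equivSubtype (by omega)

lemma permOfFin_injective {n : ℕ} : Function.Injective (permOfFin (n := n)) := by
  intro σ σ' h
  ext i
  have := congrArg (fun f : Equiv.Perm ℕ => f i) h
  simp only [permOfFin_apply_lt _ _ i.isLt] at this
  exact_mod_cast this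

lemma fix_map_lt {m : ℕ} {τ : Equiv.Perm ℕ} (hτ : ∀ i, m ≤ i → τ i = i)
    {x : ℕ} (hx : x < m) : τ x < m := by
  by_contra h
  push_neg at h
  have := hτ _ h
  have := τ.injective (hτ (τ x) h)
  omega

lemma exists_permOfFin {m : ℕ} {τ : Equiv.Perm ℕ} (hτ : ∀ i, m ≤ i → τ i = i) :
    ∃ σ : Equiv.Perm (Fin m), permOfFin σ = τ := by
  have hp : ∀ x : ℕ, x < m ↔ τ x < m := by
    intro x
    constructor
    · intro hx; exact fix_map_lt hτ hx
    · intro hx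
      by_contra h
      push_neg at h
      rw [hτ x h] at hx; omega
  refine ⟨Equiv.permCongr Fin.equivSubtype.symm (τ.subtypePerm (fun x => (hp x).symm)), ?_⟩
  ext i
  by_cases hi : i < m
  · rw [permOfFin_apply_lt _ _ hi]
    simp [Equiv.permCongr, Equiv.Perm.subtypePerm, Fin.equivSubtype]
  · rw [permOfFin_apply_ge _ _ (by omega), hτ _ (by omega)]
-- continuing a.lean
open Classical in
noncomputable def Dfix (m : ℕ) : Finset (Equiv.Perm ℕ) :=
  Finset.univ.image (permOfFin (n := m))

lemma mem_Dfix {m : ℕ} {τ : Equiv.Perm ℕ} : τ ∈ Dfix m ↔ ∀ i, m ≤ i → τ i = i := by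
  classical
  constructor
  · intro h
    rw [Dfix, Finset.mem_image] at h
    obtain ⟨σ, -, rfl⟩ := h
    intro i hi
    exact permOfFin_apply_ge σ i hi
  · intro h
    obtain ⟨σ, rfl⟩ := exists_permOfFin h
    rw [Dfix, Finset.mem_image]
    exact ⟨σ, Finset.mem_univ _, rfl⟩

lemma sum_Dfix {H : Type*} [AddCommMonoid H] (m : ℕ) (F : Equiv.Perm ℕ → H) :
    ∑ σ : Equiv.Perm (Fin m), F (permOfFin σ) = ∑ τ ∈ Dfix m, F τ := by
  classical
  rw [Dfix, Finset.sum_image (fun a _ b _ h => permOfFin_injective h)]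

open Classical in
lemma yQ_eq_sum {K H : Type*} [Field K] [Ring H] [Algebra K H]
    (T : Equiv.Perm ℕ → H) (q : K) (a b m : ℕ) (h : a + b = m) :
    yQ T q a b = ∑ τ ∈ Dfix m,
      if isDist a b τ then
        ((-1 : K) ^ invLen m τ * q ^ (a * b - invLen m τ)) • T τ
      else 0 := by
  subst h
  rw [yQ]
  exact sum_Dfix (a + b) (fun τ =>
    if isDist a b τ then ((-1 : K) ^ invLen (a+b) τ * q ^ (a * b - invLen (a+b) τ)) • T τ else 0)
open Classical in
lemma tau_val (j x : ℕ) : tau j x = if x = j then j + 1 else if x = j + 1 then j else x := by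
  split
  · next h => rw [h]; exact tau_apply_left j
  · next h =>
    split
    · next h2 => rw [h2]; exact tau_apply_right j
    · next h2 => exact tau_apply_of_ne j x h h2

lemma tau_tau (j x : ℕ) : tau j (tau j x) = x := Equiv.swap_apply_self j (j+1) x

open Classical in
lemma invLen_one (m : ℕ) : invLen m 1 = 0 := by
  rw [invLen, Finset.card_eq_zero]
  ext p
  simp only [Finset.mem_filter, Finset.notMem_empty, iff_false, not_and]
  intro _ h
  simp only [Equiv.Perm.one_apply]
  omega

open Classical in
lemma invLen_fix_succ {m : ℕ} {τ : Equiv.Perm ℕ} (hτ : ∀ i, m ≤ i → τ i = i) :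
    invLen (m + 1) τ = invLen m τ := by
  rw [invLen, invLen]
  congr 1
  ext p
  simp only [Finset.mem_filter, Finset.mem_product, Finset.mem_range]
  constructor
  · rintro ⟨⟨h1, h2⟩, h3, h4⟩
    refine ⟨⟨?_, ?_⟩, h3, h4⟩ <;> [skip; skip]
    · omega
    · -- p.2 < m : if p.2 = m then τ p.2 = p.2 = m but τ p.1 ≤ ... contradiction
      rcases Nat.lt_or_ge p.2 m with h | h
      · exact h
      · exfalso
        have hf2 : τ p.2 = p.2 := hτ _ h
        have hlt : τ p.1 < m := fix_map_lt hτ (by omega)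
        omega
  · rintro ⟨⟨h1, h2⟩, h3, h4⟩
    exact ⟨⟨by omega, by omega⟩, h3, h4⟩

open Classical in
lemma invLen_mul_tau {m j : ℕ} (hj : j + 1 < m) (σ : Equiv.Perm ℕ) (h : σ j < σ (j + 1)) :
    invLen m (σ * tau j) = invLen m σ + 1 := by
  set S := ((Finset.range m ×ˢ Finset.range m).filter
    (fun p => p.1 < p.2 ∧ (σ * tau j) p.2 < (σ * tau j) p.1)) with hS
  have hmemS : ∀ p : ℕ × ℕ, p ∈ S ↔
      (p.1 < m ∧ p.2 < m ∧ p.1 < p.2 ∧ σ (tau j p.2) < σ (tau j p.1)) := by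
    intro p
    rw [hS, Finset.mem_filter]
    simp only [Finset.mem_product, Finset.mem_range,
      Equiv.Perm.mul_apply]
    tauto
  have hmemI : ∀ p : ℕ × ℕ, p ∈ ((Finset.range m ×ˢ Finset.range m).filter
      (fun p => p.1 < p.2 ∧ σ p.2 < σ p.1)) ↔
      (p.1 < m ∧ p.2 < m ∧ p.1 < p.2 ∧ σ p.2 < σ p.1) := by
    intro p
    simp only [Finset.mem_filter, Finset.mem_product, Finset.mem_range]
    tauto
  have hJ : (j, j + 1) ∈ S := by
    rw [hmemS]
    refine ⟨by omega, by omega, by omega, ?_⟩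
    simp only [tau_apply_left, tau_apply_right]
    exact h
  have key : (S.erase (j, j + 1)).card = invLen m σ := by
    rw [invLen]
    apply Finset.card_nbij' (fun p => (tau j p.1, tau j p.2)) (fun p => (tau j p.1, tau j p.2))
    · intro p hp
      rw [Finset.mem_coe, Finset.mem_erase, hmemS] at hp
      obtain ⟨hne, h1, h2, h3, h4⟩ := hp
      rw [Finset.mem_coe, hmemI]
      beta_reduce
      have hne' : ¬(p.1 = j ∧ p.2 = j + 1) := by
        intro ⟨e1, e2⟩; exact hne (Prod.ext e1 e2)
      have t1 := tau_val j p.1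
      have t2 := tau_val j p.2
      refine ⟨by split_ifs at t1 <;> omega, by split_ifs at t2 <;> omega,
        by split_ifs at t1 t2 <;> omega, h4⟩
    · intro p hp
      rw [Finset.mem_coe, hmemI] at hp
      obtain ⟨h1, h2, h3, h4⟩ := hp
      have hne' : ¬(p.1 = j ∧ p.2 = j + 1) := by
        intro ⟨e1, e2⟩; rw [e1, e2] at h4; omega
      rw [Finset.mem_coe, Finset.mem_erase, hmemS]
      beta_reduce
      have t1 := tau_val j p.1
      have t2 := tau_val j p.2
      refine ⟨?_, by split_ifs at t1 <;> omega, by split_ifs at t2 <;> omega,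
        by split_ifs at t1 t2 <;> omega, by rw [tau_tau, tau_tau]; exact h4⟩
      intro hc
      have e1 : tau j p.1 = j := congrArg Prod.fst hc
      have e2 : tau j p.2 = j + 1 := congrArg Prod.snd hc
      split_ifs at t1 t2 <;> omega
    · intro p _; simp [tau_tau]
    · intro p _; simp [tau_tau]
  have : S.card = (S.erase (j, j + 1)).card + 1 := (Finset.card_erase_add_one hJ).symm
  rw [invLen, ← hS, this, key]
def pref (i l : ℕ) : Equiv.Perm ℕ := ((List.range l).map (fun t => tau (i - 1 - t))).prod

lemma pref_zero (i : ℕ) : pref i 0 = 1 := rfl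

lemma pref_succ (i l : ℕ) : pref i (l + 1) = pref i l * tau (i - 1 - l) := by
  rw [pref, pref, List.range_succ, List.map_append, List.prod_append]
  simp

open Classical in
lemma pref_apply (i : ℕ) : ∀ l, l ≤ i → ∀ x,
    pref i l x = if x < i - l then x else if x = i - l then i else if x ≤ i then x - 1 else x := by
  intro l
  induction l with
  | zero =>
    intro _ x
    rw [pref_zero]
    simp only [Equiv.Perm.one_apply]
    split_ifs <;> omega
  | succ l ih =>
    intro hl x
    rw [pref_succ, Equiv.Perm.mul_apply, ih (by omega) (tau (i - 1 - l) x)]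
    have t := tau_val (i - 1 - l) x
    simp only [t]
    split_ifs <;> omega

lemma cyc_eq_pref {i j : ℕ} (h : j < i) : cyc i j = pref i (i - j) := by
  rw [cyc, if_neg (by omega), pref]

open Classical in
lemma cyc_apply {i j : ℕ} (h : j < i) (x : ℕ) :
    cyc i j x = if x < j then x else if x = j then i else if x ≤ i then x - 1 else x := by
  rw [cyc_eq_pref h]
  have := pref_apply i (i - j) (by omega) x
  rw [show i - (i - j) = j from by omega] at this
  exact this

lemma invLen_mul_pref {n : ℕ} {d : Equiv.Perm ℕ} (hd : ∀ i, n ≤ i → d i = i) :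
    ∀ l, l ≤ n → invLen (n + 1) (d * pref n l) = invLen (n + 1) d + l := by
  intro l
  induction l with
  | zero => intro _; rw [pref_zero, mul_one]; omega
  | succ l ih =>
    intro hl
    rw [pref_succ, ← mul_assoc]
    have hless : (d * pref n l) (n - 1 - l) < (d * pref n l) (n - 1 - l + 1) := by
      have e1 : (d * pref n l) (n - 1 - l) = d (n - 1 - l) := by
        rw [Equiv.Perm.mul_apply, pref_apply n l (by omega), if_pos (by omega)]
      have e2 : (d * pref n l) (n - 1 - l + 1) = n := by
        rw [Equiv.Perm.mul_apply, pref_apply n l (by omega), if_neg (by omega),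
          if_pos (by omega), hd n le_rfl]
      rw [e1, e2]
      exact fix_map_lt hd (by omega)
    rw [invLen_mul_tau (by omega) _ hless, ih (by omega)]
    omega

lemma invLen_mul_cyc {n k : ℕ} (hk1 : 1 ≤ k) (hk2 : k ≤ n) {d : Equiv.Perm ℕ}
    (hd : ∀ i, n ≤ i → d i = i) :
    invLen (n + 1) (d * cyc n (k - 1)) = invLen (n + 1) d + (n + 1 - k) := by
  rw [cyc_eq_pref (by omega), show n - (k - 1) = n + 1 - k from by omega]
  exact invLen_mul_pref hd (n + 1 - k) (by omega)

lemma invLen_cyc {n k : ℕ} (hk1 : 1 ≤ k) (hk2 : k ≤ n) :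
    invLen (n + 1) (cyc n (k - 1)) = n + 1 - k := by
  have := invLen_mul_cyc hk1 hk2 (d := 1) (fun i _ => rfl)
  rwa [one_mul, invLen_one, zero_add] at this

lemma cyc_fix {n k : ℕ} (hk1 : 1 ≤ k) (hk2 : k ≤ n) :
    ∀ i, n + 1 ≤ i → cyc n (k - 1) i = i := by
  intro i hi
  rw [cyc_apply (by omega), if_neg (by omega), if_neg (by omega), if_neg (by omega)]

lemma isDist_strictMono {a b : ℕ} {σ : Equiv.Perm ℕ} (h : isDist a b σ) :
    ∀ i j, i < j → j < a + b → (j < a ∨ a ≤ i) → σ i < σ j := by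
  intro i j
  induction j with
  | zero => omega
  | succ j ih =>
    intro hij hj hbl
    have hne : j + 1 ≠ a := by omega
    have hstep : σ j < σ (j + 1) := h j hj hne
    rcases Nat.lt_or_ge i j with hij' | hij'
    · exact lt_trans (ih hij' (by omega) (by omega)) hstep
    · have : i = j := by omega
      rw [this]; exact hstep

lemma invLen_le_of_isDist {a b : ℕ} {σ : Equiv.Perm ℕ} (hσ : isDist a b σ) :
    invLen (a + b) σ ≤ a * b := by
  rw [invLen]
  have hsub : ((Finset.range (a+b) ×ˢ Finset.range (a+b)).filter
      (fun p => p.1 < p.2 ∧ σ p.2 < σ p.1)) ⊆ Finset.range a ×ˢ Finset.Ico a (a + b) := by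
    intro p hp
    simp only [Finset.mem_filter, Finset.mem_product, Finset.mem_range] at hp
    obtain ⟨⟨h1, h2⟩, h3, h4⟩ := hp
    simp only [Finset.mem_product, Finset.mem_range, Finset.mem_Ico]
    by_contra hc
    push_neg at hc
    have hor : p.2 < a ∨ a ≤ p.1 := by
      rcases Nat.lt_or_ge p.1 a with ha | ha
      · rcases Nat.lt_or_ge p.2 a with hb | hb
        · exact Or.inl hb
        · exact absurd (hc ha hb) (by omega)
      · exact Or.inr ha
    exact absurd (isDist_strictMono hσ p.1 p.2 h3 h2 hor) (by omega)
  calc _ ≤ (Finset.range a ×ˢ Finset.Ico a (a + b)).card := Finset.card_le_card hsub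
    _ = a * b := by
        rw [Finset.card_product, Finset.card_range, Nat.card_Ico, Nat.add_sub_cancel_left]
open Classical in
lemma cyc_inv_apply {n k : ℕ} (hk1 : 1 ≤ k) (hk2 : k ≤ n) (x : ℕ) :
    (cyc n (k - 1))⁻¹ x =
      if x < k - 1 then x else if x = n then k - 1 else if x < n then x + 1 else x := by
  have hj : k - 1 < n := by omega
  apply (cyc n (k - 1)).injective
  rw [show ∀ y, cyc n (k - 1) ((cyc n (k - 1))⁻¹ y) = y from fun y => Equiv.apply_symm_apply _ y]
  split_ifs with h1 h2 h3 <;> rw [cyc_apply hj] <;> split_ifs <;> omega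

lemma toE2 {n k : ℕ} (hk1 : 1 ≤ k) (hk2 : k ≤ n) {τ : Equiv.Perm ℕ}
    (hfix : ∀ i, n + 1 ≤ i → τ i = i) (hn : τ n ≠ n) (hd : isDist k (n + 1 - k) τ) :
    (∀ i, n ≤ i → (τ * (cyc n (k - 1))⁻¹) i = i) ∧
      isDist (k - 1) (n + 1 - k) (τ * (cyc n (k - 1))⁻¹) := by
  have hj : k - 1 < n := by omega
  have hd' : ∀ i, i + 1 < n + 1 → i + 1 ≠ k → τ i < τ (i + 1) := by
    intro i h1 h2; exact hd i (by omega) h2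
  have hτk : τ (k - 1) = n := by
    set x := τ⁻¹ n with hx
    have hτx : τ x = n := Equiv.apply_symm_apply τ n
    have hxle : x < n := by
      rcases Nat.lt_or_ge x (n + 1) with h | h
      · have : x ≠ n := by intro e; rw [e] at hτx; exact hn hτx
        omega
      · exfalso; have := hfix x h; rw [hτx] at this; omega
    have hxk : x = k - 1 := by
      by_contra hne
      have h1 : τ x < τ (x + 1) := hd' x (by omega) (by omega)
      have h2 : τ (x + 1) < n + 1 := fix_map_lt (m := n + 1) hfix (by omega)
      omega
    rw [← hxk]; exact hτx
  constructor
  · intro i hi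
    rw [Equiv.Perm.mul_apply, cyc_inv_apply hk1 hk2]
    rcases Nat.eq_or_lt_of_le hi with he | hlt
    · rw [if_neg (by omega), if_pos (by omega), hτk]; omega
    · rw [if_neg (by omega), if_neg (by omega), if_neg (by omega)]
      exact hfix i (by omega)
  · intro i h1 h2
    have hi : i + 1 < n := by omega
    simp only [Equiv.Perm.mul_apply, cyc_inv_apply hk1 hk2]
    split_ifs <;> first
      | (exact hd' _ (by omega) (by omega))
      | (exfalso; omega)

lemma toE1 {n k : ℕ} (hk1 : 1 ≤ k) (hk2 : k ≤ n) {d : Equiv.Perm ℕ}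
    (hfix : ∀ i, n ≤ i → d i = i) (hd : isDist (k - 1) (n + 1 - k) d) :
    (∀ i, n + 1 ≤ i → (d * cyc n (k - 1)) i = i) ∧ (d * cyc n (k - 1)) n ≠ n ∧
      isDist k (n + 1 - k) (d * cyc n (k - 1)) := by
  have hj : k - 1 < n := by omega
  have hd' : ∀ i, i + 1 < n → i + 1 ≠ k - 1 → d i < d (i + 1) := by
    intro i h1 h2; exact hd i (by omega) h2
  refine ⟨?_, ?_, ?_⟩
  · intro i hi
    rw [Equiv.Perm.mul_apply, cyc_apply hj, if_neg (by omega), if_neg (by omega),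
      if_neg (by omega)]
    exact hfix i (by omega)
  · rw [Equiv.Perm.mul_apply, cyc_apply hj, if_neg (by omega), if_neg (by omega),
      if_pos (by omega)]
    have : d (n - 1) < n := fix_map_lt hfix (by omega)
    omega
  · intro i h1 h2
    have h1' : i + 1 < n + 1 := by omega
    simp only [Equiv.Perm.mul_apply, cyc_apply hj]
    split_ifs <;> first
      | (exact hd' _ (by omega) (by omega))
      | (exfalso; omega)
      | (rw [hfix n le_rfl]; exact fix_map_lt hfix (by omega))
      | (rw [show i + 1 - 1 = i - 1 + 1 from by omega]; exact hd' _ (by omega) (by omega))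
/-- In the Hecke algebra `H_{n+1}(q)`, the partial antisymmetrizers satisfy the inductive
identity `y_{n+1/k,n+1−k} = q^k · y_{n/k,n−k} + (−1)^{n+1−k} · y_{n/k−1,n+1−k} · T_c`,
where `c` is the cycle `(n+1) ↷ k` (0-based: `cyc n (k-1)`), for `1 ≤ k ≤ n`. -/
theorem stmt7 {K H : Type*} [Field K] [Ring H] [Algebra K H] (q : K) (n k : ℕ)
    (hk1 : 1 ≤ k) (hk2 : k ≤ n)
    (T : Equiv.Perm ℕ → H)
    (hT1 : T 1 = 1)
    (hTq : ∀ i : ℕ, i + 1 < n + 1 → (T (tau i) - algebraMap K H q) * (T (tau i) + 1) = 0)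
    (hTmul : ∀ π σ : Equiv.Perm ℕ,
      (∀ m, n + 1 ≤ m → π m = m) → (∀ m, n + 1 ≤ m → σ m = m) →
      invLen (n + 1) (π * σ) = invLen (n + 1) π + invLen (n + 1) σ → T (π * σ) = T π * T σ) :
    yQ T q k (n + 1 - k)
      = q ^ k • yQ T q k (n - k)
        + ((-1 : K) ^ (n + 1 - k)) • (yQ T q (k - 1) (n + 1 - k) * T (cyc n (k - 1))) := by
  classical
  have hA : k + (n + 1 - k) = n + 1 := by omega
  have hB : k + (n - k) = n := by omega
  have hC : (k - 1) + (n + 1 - k) = n := by omega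
  rw [yQ_eq_sum T q k (n + 1 - k) (n + 1) hA, yQ_eq_sum T q k (n - k) n hB,
    yQ_eq_sum T q (k - 1) (n + 1 - k) n hC]
  rw [← Finset.sum_filter_add_sum_filter_not (Dfix (n + 1)) (fun τ => τ n = n)]
  congr 1
  -- Part A
  · have hDeq : (Dfix (n + 1)).filter (fun τ => τ n = n) = Dfix n := by
      ext τ
      simp only [Finset.mem_filter, mem_Dfix]
      constructor
      · rintro ⟨h1, h2⟩ i hi
        rcases Nat.eq_or_lt_of_le hi with he | hlt
        · rw [← he]; exact h2
        · exact h1 i hlt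
      · intro h
        exact ⟨fun i hi => h i (by omega), h n le_rfl⟩
    rw [hDeq, Finset.smul_sum]
    refine Finset.sum_congr rfl ?_
    intro τ hτ
    have hfix : ∀ i, n ≤ i → τ i = i := mem_Dfix.mp hτ
    have hiff : isDist k (n + 1 - k) τ ↔ isDist k (n - k) τ := by
      unfold isDist
      rw [hA, hB]
      constructor
      · intro h i hi hne; exact h i (by omega) hne
      · intro h i hi hne
        rcases Nat.lt_or_ge (i + 1) n with h1 | h1
        · exact h i h1 hne
        · have he : i + 1 = n := by omega
          rw [he, hfix n le_rfl]
          exact fix_map_lt hfix (by omega)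
    by_cases hd : isDist k (n - k) τ
    · rw [if_pos (hiff.mpr hd), if_pos hd, invLen_fix_succ hfix, smul_smul]
      have hle : invLen n τ ≤ k * (n - k) := by
        have h2 := invLen_le_of_isDist hd; rwa [hB] at h2
      have hmul : k * (n + 1 - k) = k * (n - k) + k := by
        rw [show n + 1 - k = (n - k) + 1 from by omega, Nat.mul_succ]
      have hexp : k * (n + 1 - k) - invLen n τ = k + (k * (n - k) - invLen n τ) := by omega
      rw [hexp, pow_add]
      congr 1
      ring
    · rw [if_neg (fun hcon => hd (hiff.mp hcon)), if_neg hd, smul_zero]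
  -- Part B
  · rw [← Finset.sum_filter, Finset.filter_filter, Finset.sum_mul]
    simp only [ite_mul, zero_mul]
    rw [Finset.smul_sum]
    simp only [smul_ite, smul_zero]
    rw [← Finset.sum_filter]
    refine Finset.sum_nbij' (fun τ => τ * (cyc n (k - 1))⁻¹) (fun d => d * cyc n (k - 1))
      ?_ ?_ ?_ ?_ ?_
    · intro τ hτ
      rw [Finset.mem_filter] at hτ
      obtain ⟨hDm, hn, hd⟩ := hτ
      have h2 := toE2 hk1 hk2 (mem_Dfix.mp hDm) hn hd
      exact Finset.mem_filter.mpr ⟨mem_Dfix.mpr h2.1, h2.2⟩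
    · intro d hd
      rw [Finset.mem_filter] at hd
      obtain ⟨hDm, hdd⟩ := hd
      have h1 := toE1 hk1 hk2 (mem_Dfix.mp hDm) hdd
      exact Finset.mem_filter.mpr ⟨mem_Dfix.mpr h1.1, h1.2.1, h1.2.2⟩
    · intro τ _; exact inv_mul_cancel_right τ (cyc n (k - 1))
    · intro d _; exact mul_inv_cancel_right d (cyc n (k - 1))
    · intro τ hτ
      beta_reduce
      rw [Finset.mem_filter] at hτ
      obtain ⟨hDm, hn, hd⟩ := hτ
      have h2 := toE2 hk1 hk2 (mem_Dfix.mp hDm) hn hd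
      set d := τ * (cyc n (k - 1))⁻¹ with hdef
      have hdc : d * cyc n (k - 1) = τ := inv_mul_cancel_right τ (cyc n (k - 1))
      have hdfix : ∀ i, n ≤ i → d i = i := h2.1
      have hdd : isDist (k - 1) (n + 1 - k) d := h2.2
      have hinv : invLen (n + 1) τ = invLen n d + (n + 1 - k) := by
        rw [← hdc, invLen_mul_cyc hk1 hk2 hdfix, invLen_fix_succ hdfix]
      have hTτ : T τ = T d * T (cyc n (k - 1)) := by
        rw [← hdc]
        exact hTmul d (cyc n (k - 1)) (fun m hm => hdfix m (by omega)) (cyc_fix hk1 hk2)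
          (by rw [invLen_mul_cyc hk1 hk2 hdfix, invLen_cyc hk1 hk2])
      have hle : invLen n d ≤ (k - 1) * (n + 1 - k) := by
        have h3 := invLen_le_of_isDist hdd; rwa [hC] at h3
      rw [hTτ, hinv, smul_mul_assoc, smul_smul]
      congr 1
      have hmul : k * (n + 1 - k) = (k - 1) * (n + 1 - k) + (n + 1 - k) := by
        have h4 : k = k - 1 + 1 := by omega
        calc k * (n + 1 - k) = (k - 1 + 1) * (n + 1 - k) := by rw [← h4]
          _ = (k - 1) * (n + 1 - k) + 1 * (n + 1 - k) := by rw [Nat.add_mul]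
          _ = (k - 1) * (n + 1 - k) + (n + 1 - k) := by rw [Nat.one_mul]
      have hexp : k * (n + 1 - k) - (invLen n d + (n + 1 - k))
          = (k - 1) * (n + 1 - k) - invLen n d := by omega
      rw [hexp, pow_add]
      ring
end

section
/- In the Hecke algebra H_{k+l+m}(q), the partial antisymmetrizers satisfy the associativity identity y_{k+l+m/k+l,m} · y_{k+l/k,l} = y_{k+l+m/k,l+m} · y_{l+m/l,m}^{(k)}, both sides being equal to y(S_{k+l+m}/S_{k,l,m}) for the Young subgroup S_{k,l,m} stabilizing {1,…,k}, {k+1,…,k+l}, {k+l+1,…,k+l+m}. -/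
/-- The `k`-step shift of a permutation: `σ^{(k)}` fixes `0,…,k-1` and permutes
`k, k+1, …` exactly as `σ` permutes `0, 1, …`. -/
def shiftPerm (k : ℕ) (σ : Equiv.Perm ℕ) : Equiv.Perm ℕ where
  toFun m := if m < k then m else σ (m - k) + k
  invFun m := if m < k then m else σ.symm (m - k) + k
  left_inv m := by
    by_cases h : m < k
    · simp [h]
    · have h' : ¬ (σ (m - k) + k < k) := by omega
      simp only [h, if_neg, h', if_false, Nat.add_sub_cancel, Equiv.symm_apply_apply]
      omega
  right_inv m := by
    by_cases h : m < k
    · simp [h]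
    · have h' : ¬ (σ.symm (m - k) + k < k) := by omega
      simp only [h, if_neg, h', if_false, Nat.add_sub_cancel, Equiv.apply_symm_apply]
      omega

open Classical in
/-- The `k`-step shift `y_{l+m/l,m}^{(k)}` of the partial antisymmetrizer
`y_{l+m/l,m}`, obtained via `T_i ↦ T_{k+i}` (on the standard basis, `T_d ↦ T_{d^{(k)}}`). -/
noncomputable def yQShift {K H : Type*} [Field K] [Ring H] [Algebra K H]
    (T : Equiv.Perm ℕ → H) (q : K) (k l m : ℕ) : H :=
  ∑ σ : Equiv.Perm (Fin (l + m)),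
    if isDist l m (permOfFin σ) then
      ((-1 : K) ^ invLen (l + m) (permOfFin σ) *
        q ^ (l * m - invLen (l + m) (permOfFin σ))) • T (shiftPerm k (permOfFin σ))
    else 0

/-- `σ` is a distinguished left coset representative of the Young subgroup `S_{k,l,m}`
of `S_{k+l+m}`: it is increasing on the three blocks. -/
def isDist3 (k l m : ℕ) (σ : Equiv.Perm ℕ) : Prop :=
  ∀ i : ℕ, i + 1 < k + l + m → i + 1 ≠ k → i + 1 ≠ k + l → σ i < σ (i + 1)

open Classical in
/-- The partial antisymmetrizer `y(S_{k+l+m}/S_{k,l,m})`. -/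
noncomputable def yQ3 {K H : Type*} [Field K] [Ring H] [Algebra K H]
    (T : Equiv.Perm ℕ → H) (q : K) (k l m : ℕ) : H :=
  ∑ σ : Equiv.Perm (Fin (k + l + m)),
    if isDist3 k l m (permOfFin σ) then
      ((-1 : K) ^ invLen (k + l + m) (permOfFin σ) *
        q ^ (k * l + k * m + l * m - invLen (k + l + m) (permOfFin σ))) •
          T (permOfFin σ)
    else 0

namespace S9

def FixesFrom (n : ℕ) (σ : Equiv.Perm ℕ) : Prop := ∀ j, n ≤ j → σ j = j

theorem fixesFrom_inv {n : ℕ} {σ : Equiv.Perm ℕ} (h : FixesFrom n σ) : FixesFrom n σ⁻¹ := by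
  intro j hj
  conv_lhs => rw [← h j hj]
  simp

theorem fixesFrom_lt {n : ℕ} {σ : Equiv.Perm ℕ} (h : FixesFrom n σ) {i : ℕ} (hi : i < n) :
    σ i < n := by
  by_contra hc
  push_neg at hc
  have h2 := fixesFrom_inv h (σ i) hc
  simp only [Equiv.Perm.coe_inv, Equiv.symm_apply_apply] at h2
  omega

theorem permOfFin_lt {n : ℕ} (σ : Equiv.Perm (Fin n)) {j : ℕ} (h : j < n) :
    permOfFin σ j = (σ ⟨j, h⟩ : ℕ) := by
  unfold permOfFin
  rw [Equiv.Perm.extendDomain_apply_subtype σ Fin.equivSubtype (p := fun i => i < n) h]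
  rfl

theorem permOfFin_ge {n : ℕ} (σ : Equiv.Perm (Fin n)) {j : ℕ} (h : n ≤ j) :
    permOfFin σ j = j := by
  unfold permOfFin
  exact Equiv.Perm.extendDomain_apply_not_subtype σ Fin.equivSubtype (p := fun i => i < n) (by omega)

theorem permOfFin_fixes {n : ℕ} (σ : Equiv.Perm (Fin n)) : FixesFrom n (permOfFin σ) :=
  fun _ hj => permOfFin_ge σ hj

theorem permOfFin_injective {n : ℕ} : Function.Injective (permOfFin (n := n)) := by
  intro σ σ' hh
  ext i
  have := congrArg (fun f => f (i : ℕ)) (congrArg (Equiv.toFun) hh)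
  simpa [permOfFin_lt σ i.2, permOfFin_lt σ' i.2] using this

def finOfPerm (n : ℕ) (π : Equiv.Perm ℕ) (h : FixesFrom n π) : Equiv.Perm (Fin n) where
  toFun i := ⟨π i, fixesFrom_lt h i.2⟩
  invFun i := ⟨π⁻¹ i, fixesFrom_lt (fixesFrom_inv h) i.2⟩
  left_inv i := by simp
  right_inv i := by simp

theorem permOfFin_finOfPerm {n : ℕ} {π : Equiv.Perm ℕ} (h : FixesFrom n π) :
    permOfFin (finOfPerm n π h) = π := by
  ext j
  by_cases hj : j < n
  · rw [permOfFin_lt _ hj]; rfl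
  · rw [permOfFin_ge _ (le_of_not_gt hj), h j (le_of_not_gt hj)]

theorem mono_of_adj {σ : Equiv.Perm ℕ} {a b : ℕ} (h : ∀ i, a ≤ i → i + 1 < b → σ i < σ (i + 1)) :
    ∀ i j, a ≤ i → i < j → j < b → σ i < σ j := by
  intro i j hai hij hjb
  induction j with
  | zero => omega
  | succ j ih =>
    rcases Nat.lt_or_ge i j with h' | h'
    · exact lt_trans (ih h' (by omega)) (h j (by omega) hjb)
    · have hij' : i = j := by omega
      subst hij'; exact h i hai hjb

theorem invLen_restrict {b n : ℕ} (hbn : b ≤ n) {σ : Equiv.Perm ℕ} (h : FixesFrom b σ) :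
    invLen n σ = invLen b σ := by
  unfold invLen
  congr 1
  ext p
  simp only [Finset.mem_filter, Finset.mem_product, Finset.mem_range]
  constructor
  · rintro ⟨⟨h1, h2⟩, h3, h4⟩
    have hp2 : p.2 < b := by
      by_contra hc
      push_neg at hc
      have e2 := h p.2 hc
      rcases Nat.lt_or_ge p.1 b with hb | hb
      · have := fixesFrom_lt h hb
        omega
      · have e1 := h p.1 hb
        omega
    exact ⟨⟨by omega, hp2⟩, h3, h4⟩
  · rintro ⟨⟨h1, h2⟩, h3, h4⟩
    exact ⟨⟨by omega, by omega⟩, h3, h4⟩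

end S9
namespace S9

def BlockPerm (a b : ℕ) (w : Equiv.Perm ℕ) : Prop :=
  (∀ j, j < a → w j = j) ∧ ∀ j, b ≤ j → w j = j

theorem blockPerm_inv {a b : ℕ} {w : Equiv.Perm ℕ} (h : BlockPerm a b w) : BlockPerm a b w⁻¹ := by
  constructor
  · intro j hj
    conv_lhs => rw [← h.1 j hj]
    simp
  · intro j hj
    conv_lhs => rw [← h.2 j hj]
    simp

theorem blockPerm_mem {a b : ℕ} {w : Equiv.Perm ℕ} (h : BlockPerm a b w) {j : ℕ}
    (h1 : a ≤ j) (h2 : j < b) : a ≤ w j ∧ w j < b := by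
  constructor
  · by_contra hc
    push_neg at hc
    have := (blockPerm_inv h).1 (w j) hc
    simp only [Equiv.Perm.coe_inv, Equiv.symm_apply_apply] at this
    omega
  · by_contra hc
    push_neg at hc
    have := (blockPerm_inv h).2 (w j) hc
    simp only [Equiv.Perm.coe_inv, Equiv.symm_apply_apply] at this
    omega

theorem blockPerm_lt_of_lt {a b : ℕ} {w : Equiv.Perm ℕ} (h : BlockPerm a b w) {i j : ℕ}
    (hij : i < j) (hout : i < a ∨ b ≤ j) : w i < w j := by
  rcases hout with hi | hj
  · rw [h.1 i hi]
    rcases Nat.lt_or_ge j a with hja | hja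
    · rw [h.1 j hja]; exact hij
    · rcases Nat.lt_or_ge j b with hjb | hjb
      · exact lt_of_lt_of_le hi (blockPerm_mem h hja hjb).1
      · rw [h.2 j hjb]; exact hij
  · rw [h.2 j hj]
    rcases Nat.lt_or_ge i a with hia | hia
    · rw [h.1 i hia]; exact hij
    · rcases Nat.lt_or_ge i b with hib | hib
      · exact lt_of_lt_of_le (blockPerm_mem h hia hib).2 hj
      · rw [h.2 i hib]; exact hij

open Classical in
theorem invLen_mul_add {n a b : ℕ} (hbn : b ≤ n) {π w : Equiv.Perm ℕ}
    (hπm : ∀ i j, a ≤ i → i < j → j < b → π i < π j)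
    (hw : BlockPerm a b w) :
    invLen n (π * w) = invLen n π + invLen n w := by
  classical
  unfold invLen
  set S := Finset.range n ×ˢ Finset.range n with hS
  set P : ℕ × ℕ → Prop := fun p => a ≤ p.1 ∧ p.2 < b with hP
  have key : ∀ σ : Equiv.Perm ℕ,
      ((S.filter fun p => p.1 < p.2 ∧ σ p.2 < σ p.1).filter P).card
      + ((S.filter fun p => p.1 < p.2 ∧ σ p.2 < σ p.1).filter fun p => ¬ P p).card
      = (S.filter fun p => p.1 < p.2 ∧ σ p.2 < σ p.1).card := fun σ =>
    Finset.card_filter_add_card_filter_not (p := P)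
  -- block part for π*w equals block part for w
  have hA : ((S.filter fun p => p.1 < p.2 ∧ (π * w) p.2 < (π * w) p.1).filter P)
      = ((S.filter fun p => p.1 < p.2 ∧ w p.2 < w p.1).filter P) := by
    ext p
    simp only [hS, Finset.mem_filter, Finset.mem_product, Finset.mem_range, hP,
      Equiv.Perm.mul_apply]
    constructor
    · rintro ⟨⟨⟨hn1, hn2⟩, hlt, hinv⟩, ha1, hb2⟩
      refine ⟨⟨⟨hn1, hn2⟩, hlt, ?_⟩, ha1, hb2⟩
      by_contra hc
      push_neg at hc
      rcases lt_or_eq_of_le hc with hc | hc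
      · have m1 := blockPerm_mem hw ha1 (lt_trans hlt hb2)
        have m2 := blockPerm_mem hw (le_trans ha1 (le_of_lt hlt)) hb2
        exact absurd (hπm _ _ m1.1 hc m2.2) (by omega)
      · exact absurd (w.injective hc) (by omega)
    · rintro ⟨⟨⟨hn1, hn2⟩, hlt, hinv⟩, ha1, hb2⟩
      refine ⟨⟨⟨hn1, hn2⟩, hlt, ?_⟩, ha1, hb2⟩
      have m2 := blockPerm_mem hw (le_trans ha1 (le_of_lt hlt)) hb2
      have m1 := blockPerm_mem hw ha1 (lt_trans hlt hb2)
      exact hπm _ _ m2.1 hinv m1.2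
  -- w has no out-of-block inversions
  have hB : ((S.filter fun p => p.1 < p.2 ∧ w p.2 < w p.1).filter fun p => ¬ P p) = ∅ := by
    rw [Finset.filter_eq_empty_iff]
    intro p hp
    simp only [hS, Finset.mem_filter, Finset.mem_product, Finset.mem_range] at hp
    obtain ⟨_, hlt, hinv⟩ := hp
    rw [not_not]
    rcases Nat.lt_or_ge p.1 a with h1 | h1
    · exact absurd (blockPerm_lt_of_lt hw hlt (Or.inl h1)) (by omega)
    · rcases Nat.lt_or_ge p.2 b with h2 | h2
      · exact ⟨h1, h2⟩
      · exact absurd (blockPerm_lt_of_lt hw hlt (Or.inr h2)) (by omega)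
  -- π has no in-block inversions
  have hD : ((S.filter fun p => p.1 < p.2 ∧ π p.2 < π p.1).filter P) = ∅ := by
    rw [Finset.filter_eq_empty_iff]
    intro p hp
    simp only [hS, Finset.mem_filter, Finset.mem_product, Finset.mem_range] at hp
    obtain ⟨_, hlt, hinv⟩ := hp
    rintro ⟨ha1, hb2⟩
    exact absurd (hπm _ _ ha1 hlt hb2) (by omega)
  -- out-of-block part of π*w biject with out-of-block part of π
  have hC : ((S.filter fun p => p.1 < p.2 ∧ (π * w) p.2 < (π * w) p.1).filter fun p => ¬ P p).card
      = ((S.filter fun p => p.1 < p.2 ∧ π p.2 < π p.1).filter fun p => ¬ P p).card := by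
    apply Finset.card_bij' (fun p _ => (w p.1, w p.2)) (fun p _ => (w⁻¹ p.1, w⁻¹ p.2))
    · intro p hp
      simp only [hS, Finset.mem_filter, Finset.mem_product, Finset.mem_range, hP,
        Equiv.Perm.mul_apply, not_and, not_lt] at hp ⊢
      obtain ⟨⟨⟨hn1, hn2⟩, hlt, hinv⟩, hnp⟩ := hp
      have hout : p.1 < a ∨ b ≤ p.2 := by
        by_cases h1 : a ≤ p.1
        · exact Or.inr (hnp h1)
        · exact Or.inl (by omega)
      have hwlt := blockPerm_lt_of_lt hw hlt hout
      have hb1 : w p.1 < n := by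
        rcases Nat.lt_or_ge p.1 a with h1 | h1
        · rw [hw.1 p.1 h1]; exact hn1
        · rcases Nat.lt_or_ge p.1 b with h2 | h2
          · exact lt_of_lt_of_le (blockPerm_mem hw h1 h2).2 hbn
          · rw [hw.2 p.1 h2]; exact hn1
      have hb2 : w p.2 < n := by
        rcases Nat.lt_or_ge p.2 a with h1 | h1
        · rw [hw.1 p.2 h1]; exact hn2
        · rcases Nat.lt_or_ge p.2 b with h2 | h2
          · exact lt_of_lt_of_le (blockPerm_mem hw h1 h2).2 hbn
          · rw [hw.2 p.2 h2]; exact hn2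
      refine ⟨⟨⟨hb1, hb2⟩, hwlt, hinv⟩, ?_⟩
      intro hge
      rcases hout with h1 | h1
      · rw [hw.1 p.1 h1] at hge; omega
      · rw [hw.2 p.2 h1]; omega
    · intro p hp
      simp only [hS, Finset.mem_filter, Finset.mem_product, Finset.mem_range, hP,
        Equiv.Perm.mul_apply, not_and, not_lt] at hp ⊢
      obtain ⟨⟨⟨hn1, hn2⟩, hlt, hinv⟩, hnp⟩ := hp
      have hw' := blockPerm_inv hw
      have hout : p.1 < a ∨ b ≤ p.2 := by
        by_cases h1 : a ≤ p.1
        · exact Or.inr (hnp h1)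
        · exact Or.inl (by omega)
      have hwlt := blockPerm_lt_of_lt hw' hlt hout
      have hb1 : w⁻¹ p.1 < n := by
        rcases Nat.lt_or_ge p.1 a with h1 | h1
        · rw [hw'.1 p.1 h1]; exact hn1
        · rcases Nat.lt_or_ge p.1 b with h2 | h2
          · exact lt_of_lt_of_le (blockPerm_mem hw' h1 h2).2 hbn
          · rw [hw'.2 p.1 h2]; exact hn1
      have hb2 : w⁻¹ p.2 < n := by
        rcases Nat.lt_or_ge p.2 a with h1 | h1
        · rw [hw'.1 p.2 h1]; exact hn2
        · rcases Nat.lt_or_ge p.2 b with h2 | h2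
          · exact lt_of_lt_of_le (blockPerm_mem hw' h1 h2).2 hbn
          · rw [hw'.2 p.2 h2]; exact hn2
      refine ⟨⟨⟨hb1, hb2⟩, hwlt, by simpa using hinv⟩, ?_⟩
      intro hge
      rcases hout with h1 | h1
      · rw [hw'.1 p.1 h1] at hge; omega
      · rw [hw'.2 p.2 h1]; omega
    · intro p hp; simp
    · intro p hp; simp
  have e1 := key (π * w)
  have e2 := key w
  have e3 := key π
  rw [hA] at e1
  rw [hB] at e2
  rw [hD] at e3
  simp only [Finset.card_empty] at e2 e3
  omega

end S9
namespace S9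

theorem shiftPerm_apply_lt {k : ℕ} (σ : Equiv.Perm ℕ) {j : ℕ} (h : j < k) :
    shiftPerm k σ j = j := if_pos h

theorem shiftPerm_apply_ge {k : ℕ} (σ : Equiv.Perm ℕ) {j : ℕ} (h : k ≤ j) :
    shiftPerm k σ j = σ (j - k) + k := if_neg (by omega)

theorem shiftPerm_injective (k : ℕ) : Function.Injective (shiftPerm k) := by
  intro σ σ' hh
  ext j
  have := congrArg (fun f => f (j + k)) (congrArg (fun (e : Equiv.Perm ℕ) => e.toFun) hh)
  simp only [Equiv.toFun_as_coe] at this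
  rw [shiftPerm_apply_ge σ (by omega), shiftPerm_apply_ge σ' (by omega)] at this
  simpa using this

theorem shiftPerm_fixes {k r : ℕ} {σ : Equiv.Perm ℕ} (h : FixesFrom r σ) :
    FixesFrom (k + r) (shiftPerm k σ) := by
  intro j hj
  rw [shiftPerm_apply_ge σ (by omega), h (j - k) (by omega)]
  omega

theorem shiftPerm_blockPerm {k r : ℕ} {σ : Equiv.Perm ℕ} (h : FixesFrom r σ) :
    BlockPerm k (k + r) (shiftPerm k σ) :=
  ⟨fun j hj => shiftPerm_apply_lt σ hj, shiftPerm_fixes h⟩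

theorem invLen_shiftPerm {k r : ℕ} (σ : Equiv.Perm ℕ) :
    invLen (k + r) (shiftPerm k σ) = invLen r σ := by
  unfold invLen
  apply Finset.card_bij' (fun p _ => (p.1 - k, p.2 - k)) (fun p _ => (p.1 + k, p.2 + k))
  · intro p hp
    simp only [Finset.mem_filter, Finset.mem_product, Finset.mem_range] at hp ⊢
    obtain ⟨⟨hn1, hn2⟩, hlt, hinv⟩ := hp
    have hk1 : k ≤ p.1 := by
      by_contra hc
      push_neg at hc
      rw [shiftPerm_apply_lt σ hc] at hinv
      rcases Nat.lt_or_ge p.2 k with h2 | h2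
      · rw [shiftPerm_apply_lt σ h2] at hinv; omega
      · rw [shiftPerm_apply_ge σ h2] at hinv; omega
    have hk2 : k ≤ p.2 := by omega
    rw [shiftPerm_apply_ge σ hk1, shiftPerm_apply_ge σ hk2] at hinv
    exact ⟨⟨by omega, by omega⟩, by omega, by omega⟩
  · intro p hp
    simp only [Finset.mem_filter, Finset.mem_product, Finset.mem_range] at hp ⊢
    obtain ⟨⟨hn1, hn2⟩, hlt, hinv⟩ := hp
    rw [shiftPerm_apply_ge σ (by omega), shiftPerm_apply_ge σ (by omega)]
    simp only [Nat.add_sub_cancel]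
    exact ⟨⟨by omega, by omega⟩, by omega, by omega⟩
  · intro p hp
    simp only [Finset.mem_filter, Finset.mem_product, Finset.mem_range] at hp
    obtain ⟨⟨hn1, hn2⟩, hlt, hinv⟩ := hp
    have hk1 : k ≤ p.1 := by
      by_contra hc
      push_neg at hc
      rw [shiftPerm_apply_lt σ hc] at hinv
      rcases Nat.lt_or_ge p.2 k with h2 | h2
      · rw [shiftPerm_apply_lt σ h2] at hinv; omega
      · rw [shiftPerm_apply_ge σ h2] at hinv; omega
    have : (p.1 - k + k, p.2 - k + k) = p := by
      ext <;> simp <;> omega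
    exact this
  · intro p hp
    simp only [Nat.add_sub_cancel]

theorem invLen_le_bound {n x : ℕ} {σ : Equiv.Perm ℕ}
    (h1 : ∀ i j, i < j → j < x → σ i < σ j)
    (h2 : ∀ i j, x ≤ i → i < j → j < n → σ i < σ j) :
    invLen n σ ≤ x * (n - x) := by
  unfold invLen
  have hsub : ((Finset.range n ×ˢ Finset.range n).filter
      fun p => p.1 < p.2 ∧ σ p.2 < σ p.1) ⊆ Finset.range x ×ˢ Finset.Ico x n := by
    intro p hp
    simp only [Finset.mem_filter, Finset.mem_product, Finset.mem_range, Finset.mem_Ico] at hp ⊢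
    obtain ⟨⟨hn1, hn2⟩, hlt, hinv⟩ := hp
    have hx2 : x ≤ p.2 := by
      by_contra hc
      push_neg at hc
      exact absurd (h1 _ _ hlt hc) (by omega)
    have hx1 : p.1 < x := by
      by_contra hc
      push_neg at hc
      exact absurd (h2 _ _ hc hlt hn2) (by omega)
    exact ⟨hx1, hx2, hn2⟩
  calc _ ≤ (Finset.range x ×ˢ Finset.Ico x n).card := Finset.card_le_card hsub
    _ = x * (n - x) := by rw [Finset.card_product, Finset.card_range, Nat.card_Ico]

end S9
namespace S9

/-- rank of `d i` among `d`-values on the block `[a,b)` -/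
def rk (a b : ℕ) (d : Equiv.Perm ℕ) (i : ℕ) : ℕ :=
  ((Finset.Ico a b).filter fun j => d j < d i).card

theorem rk_lt_rk {a b : ℕ} {d : Equiv.Perm ℕ} {i i' : ℕ} (hi : i ∈ Finset.Ico a b)
    (hd : d i < d i') : rk a b d i < rk a b d i' := by
  apply Finset.card_lt_card
  rw [Finset.ssubset_iff_of_subset]
  · exact ⟨i, Finset.mem_filter.2 ⟨hi, hd⟩, fun hc => absurd (Finset.mem_filter.1 hc).2 (by omega)⟩
  · intro j hj
    rw [Finset.mem_filter] at hj ⊢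
    exact ⟨hj.1, lt_trans hj.2 hd⟩

theorem rk_lt_iff {a b : ℕ} {d : Equiv.Perm ℕ} {i i' : ℕ} (hi : i ∈ Finset.Ico a b)
    (hi' : i' ∈ Finset.Ico a b) : rk a b d i < rk a b d i' ↔ d i < d i' := by
  constructor
  · intro h
    rcases lt_trichotomy (d i) (d i') with hc | hc | hc
    · exact hc
    · exact absurd h (by simp [rk, hc])
    · exact absurd (rk_lt_rk hi' hc) (by omega)
  · exact rk_lt_rk hi

theorem rk_lt_bound {a b : ℕ} {d : Equiv.Perm ℕ} {i : ℕ} (hi : i ∈ Finset.Ico a b) :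
    rk a b d i < b - a := by
  have := Finset.card_lt_card (s := (Finset.Ico a b).filter fun j => d j < d i)
    (t := Finset.Ico a b) ?_
  · rwa [Nat.card_Ico] at this
  · rw [Finset.ssubset_iff_of_subset (Finset.filter_subset _ _)]
    exact ⟨i, hi, fun hc => absurd (Finset.mem_filter.1 hc).2 (by omega)⟩

def sortFun (a b : ℕ) (d : Equiv.Perm ℕ) : ℕ → ℕ := fun i =>
  if a ≤ i ∧ i < b then a + rk a b d i else i

theorem sortFun_in {a b : ℕ} (d : Equiv.Perm ℕ) {i : ℕ} (h1 : a ≤ i) (h2 : i < b) :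
    sortFun a b d i = a + rk a b d i := if_pos ⟨h1, h2⟩

theorem sortFun_out {a b : ℕ} (d : Equiv.Perm ℕ) {i : ℕ} (h : i < a ∨ b ≤ i) :
    sortFun a b d i = i := if_neg (by omega)

theorem sortFun_mem {a b : ℕ} (d : Equiv.Perm ℕ) {i : ℕ} (h1 : a ≤ i) (h2 : i < b) :
    a ≤ sortFun a b d i ∧ sortFun a b d i < b := by
  rw [sortFun_in d h1 h2]
  have := rk_lt_bound (d := d) (Finset.mem_Ico.2 ⟨h1, h2⟩)
  omega

theorem sortFun_injective (a b : ℕ) (d : Equiv.Perm ℕ) : Function.Injective (sortFun a b d) := by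
  intro i i' h
  by_cases hi : a ≤ i ∧ i < b
  · by_cases hi' : a ≤ i' ∧ i' < b
    · rw [sortFun_in d hi.1 hi.2, sortFun_in d hi'.1 hi'.2] at h
      have hr : rk a b d i = rk a b d i' := by omega
      rcases lt_trichotomy (d i) (d i') with hc | hc | hc
      · exact absurd (rk_lt_rk (Finset.mem_Ico.2 hi) hc) (by omega)
      · exact d.injective hc
      · exact absurd (rk_lt_rk (Finset.mem_Ico.2 hi') hc) (by omega)
    · have := sortFun_mem d hi.1 hi.2
      rw [show sortFun a b d i' = i' from sortFun_out d (by omega)] at h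
      omega
  · by_cases hi' : a ≤ i' ∧ i' < b
    · have := sortFun_mem d hi'.1 hi'.2
      rw [show sortFun a b d i = i from sortFun_out d (by omega)] at h
      omega
    · rw [sortFun_out d (by omega), sortFun_out d (by omega)] at h
      exact h

theorem sortFun_bijective (a b : ℕ) (d : Equiv.Perm ℕ) : Function.Bijective (sortFun a b d) := by
  refine ⟨sortFun_injective a b d, ?_⟩
  have hsurj := Finset.surj_on_of_inj_on_of_card_le
    (s := Finset.Ico a b) (t := Finset.Ico a b) (fun i _ => sortFun a b d i)
    (fun i hi => by
      rw [Finset.mem_Ico] at hi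
      exact Finset.mem_Ico.2 (sortFun_mem d hi.1 hi.2))
    (fun i i' _ _ h => sortFun_injective a b d h) le_rfl
  intro y
  by_cases hy : a ≤ y ∧ y < b
  · obtain ⟨i, hi, hiy⟩ := hsurj y (Finset.mem_Ico.2 hy)
    exact ⟨i, hiy.symm⟩
  · exact ⟨y, sortFun_out d (by omega)⟩

noncomputable def sortP (a b : ℕ) (d : Equiv.Perm ℕ) : Equiv.Perm ℕ :=
  Equiv.ofBijective _ (sortFun_bijective a b d)

theorem sortP_apply (a b : ℕ) (d : Equiv.Perm ℕ) (i : ℕ) : sortP a b d i = sortFun a b d i := rfl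

theorem sortP_blockPerm (a b : ℕ) (d : Equiv.Perm ℕ) : BlockPerm a b (sortP a b d) :=
  ⟨fun j hj => sortFun_out d (Or.inl hj), fun j hj => sortFun_out d (Or.inr hj)⟩

theorem sortP_lt_iff {a b : ℕ} (d : Equiv.Perm ℕ) {i i' : ℕ} (hi : a ≤ i ∧ i < b)
    (hi' : a ≤ i' ∧ i' < b) : sortP a b d i < sortP a b d i' ↔ d i < d i' := by
  rw [sortP_apply, sortP_apply, sortFun_in d hi.1 hi.2, sortFun_in d hi'.1 hi'.2]
  rw [Nat.add_lt_add_iff_left]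
  exact rk_lt_iff (Finset.mem_Ico.2 hi) (Finset.mem_Ico.2 hi')

/-- `d * (sortP a b d)⁻¹` is increasing on the block `[a,b)`. -/
theorem sorted_mul_sortP_inv {a b : ℕ} (d : Equiv.Perm ℕ) :
    ∀ x y, a ≤ x → x < y → y < b → (d * (sortP a b d)⁻¹) x < (d * (sortP a b d)⁻¹) y := by
  intro x y hax hxy hyb
  have hs := blockPerm_inv (sortP_blockPerm a b d)
  have hx := blockPerm_mem hs hax (by omega)
  have hy := blockPerm_mem hs (by omega) hyb
  simp only [Equiv.Perm.mul_apply]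
  rw [← sortP_lt_iff d hx hy]
  simp only [Equiv.Perm.coe_inv, Equiv.apply_symm_apply]
  exact hxy

theorem mul_sortP_inv_out {a b : ℕ} (d : Equiv.Perm ℕ) {j : ℕ} (h : j < a ∨ b ≤ j) :
    (d * (sortP a b d)⁻¹) j = d j := by
  have hs := blockPerm_inv (sortP_blockPerm a b d)
  simp only [Equiv.Perm.mul_apply]
  rcases h with h | h
  · rw [hs.1 j h]
  · rw [hs.2 j h]

/-- uniqueness: if `π` is sorted on the block and `w` is a block permutation, then
`sortP a b (π * w) = w`. -/
theorem sortP_mul {a b : ℕ} {π w : Equiv.Perm ℕ}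
    (hπm : ∀ i j, a ≤ i → i < j → j < b → π i < π j)
    (hw : BlockPerm a b w) : sortP a b (π * w) = w := by
  ext i
  by_cases hi : a ≤ i ∧ i < b
  · rw [sortP_apply, sortFun_in _ hi.1 hi.2]
    have hwi := blockPerm_mem hw hi.1 hi.2
    have hfe : ((Finset.Ico a b).filter fun j => (π * w) j < (π * w) i)
        = (Finset.Ico a b).filter fun j => w j < w i := by
      apply Finset.filter_congr
      intro j hj
      rw [Finset.mem_Ico] at hj
      have hwj := blockPerm_mem hw hj.1 hj.2
      simp only [Equiv.Perm.mul_apply, eq_iff_iff]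
      constructor
      · intro h
        rcases lt_trichotomy (w j) (w i) with hc | hc | hc
        · exact hc
        · exact absurd h (by rw [hc]; omega)
        · exact absurd (hπm _ _ hwi.1 hc hwj.2) (by omega)
      · intro h
        exact hπm _ _ hwj.1 h hwi.2
    have hcard : ((Finset.Ico a b).filter fun j => w j < w i).card = w i - a := by
      have : ((Finset.Ico a b).filter fun j => w j < w i).card
          = (Finset.Ico a (w i)).card := by
        apply Finset.card_bij' (fun j _ => w j) (fun x _ => w⁻¹ x)
        · intro j hj
          simp only [Finset.mem_filter, Finset.mem_Ico] at hj ⊢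
          exact ⟨(blockPerm_mem hw hj.1.1 hj.1.2).1, hj.2⟩
        · intro x hx
          simp only [Finset.mem_filter, Finset.mem_Ico] at hx ⊢
          have hxb : a ≤ x ∧ x < b := ⟨hx.1, by omega⟩
          have := blockPerm_mem (blockPerm_inv hw) hxb.1 hxb.2
          refine ⟨⟨this.1, this.2⟩, ?_⟩
          simp only [Equiv.Perm.coe_inv, Equiv.apply_symm_apply]
          exact hx.2
        · intro j hj; simp
        · intro x hx; simp
      rw [this, Nat.card_Ico]
    rw [rk, hfe, hcard]
    omega
  · rw [sortP_apply, sortFun_out _ (by omega)]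
    rcases Nat.lt_or_ge i a with h | h
    · exact (hw.1 i h).symm
    · exact (hw.2 i (by omega)).symm

end S9
namespace S9

theorem fixesFrom_mono {b n : ℕ} (hbn : b ≤ n) {σ : Equiv.Perm ℕ} (h : FixesFrom b σ) :
    FixesFrom n σ := fun j hj => h j (le_trans hbn hj)

theorem fixesFrom_mul {n : ℕ} {σ τ : Equiv.Perm ℕ} (hσ : FixesFrom n σ) (hτ : FixesFrom n τ) :
    FixesFrom n (σ * τ) := fun j hj => by
  simp only [Equiv.Perm.mul_apply]
  rw [hτ j hj, hσ j hj]

theorem invLen_le_bound' {n x1 x2 x3 : ℕ} {σ : Equiv.Perm ℕ}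
    (h0 : ∀ i j, i < j → j < n → σ j < σ i → x1 ≤ i ∧ i < x2 ∧ x2 ≤ j ∧ j < x3) :
    invLen n σ ≤ (x2 - x1) * (x3 - x2) := by
  unfold invLen
  have hsub : ((Finset.range n ×ˢ Finset.range n).filter
      fun p => p.1 < p.2 ∧ σ p.2 < σ p.1) ⊆ Finset.Ico x1 x2 ×ˢ Finset.Ico x2 x3 := by
    intro p hp
    simp only [Finset.mem_filter, Finset.mem_product, Finset.mem_range, Finset.mem_Ico] at hp ⊢
    obtain ⟨⟨hn1, hn2⟩, hlt, hinv⟩ := hp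
    obtain ⟨a1, a2, a3, a4⟩ := h0 p.1 p.2 hlt hn2 hinv
    exact ⟨⟨a1, a2⟩, a3, a4⟩
  calc _ ≤ (Finset.Ico x1 x2 ×ˢ Finset.Ico x2 x3).card := Finset.card_le_card hsub
    _ = (x2 - x1) * (x3 - x2) := by rw [Finset.card_product, Nat.card_Ico, Nat.card_Ico]

open Classical in
noncomputable def Dset (n : ℕ) (P : Equiv.Perm ℕ → Prop) : Finset (Equiv.Perm ℕ) :=
  (Finset.univ.image (permOfFin (n := n))).filter P

theorem mem_Dset {n : ℕ} {P : Equiv.Perm ℕ → Prop} {π : Equiv.Perm ℕ} :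
    π ∈ Dset n P ↔ FixesFrom n π ∧ P π := by
  classical
  simp only [Dset, Finset.mem_filter, Finset.mem_image, Finset.mem_univ, true_and]
  constructor
  · rintro ⟨⟨σ, rfl⟩, hP⟩
    exact ⟨permOfFin_fixes σ, hP⟩
  · rintro ⟨hf, hP⟩
    exact ⟨⟨finOfPerm n π hf, permOfFin_finOfPerm hf⟩, hP⟩

theorem yQ_eq {K H : Type*} [Field K] [Ring H] [Algebra K H]
    (T : Equiv.Perm ℕ → H) (q : K) (a b : ℕ) :
    yQ T q a b = ∑ π ∈ Dset (a + b) (isDist a b),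
      ((-1 : K) ^ invLen (a + b) π * q ^ (a * b - invLen (a + b) π)) • T π := by
  classical
  rw [Dset, Finset.sum_filter,
    Finset.sum_image (fun x _ y _ h => permOfFin_injective h)]
  rw [yQ]

theorem yQ3_eq {K H : Type*} [Field K] [Ring H] [Algebra K H]
    (T : Equiv.Perm ℕ → H) (q : K) (k l m : ℕ) :
    yQ3 T q k l m = ∑ π ∈ Dset (k + l + m) (isDist3 k l m),
      ((-1 : K) ^ invLen (k + l + m) π *
        q ^ (k * l + k * m + l * m - invLen (k + l + m) π)) • T π := by
  classical
  rw [Dset, Finset.sum_filter,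
    Finset.sum_image (fun x _ y _ h => permOfFin_injective h)]
  rw [yQ3]

/-- the inverse of `shiftPerm`: `unshift k w i = w (i + k) - k` for `w` fixing `[0,k)`. -/
def SP (k l m : ℕ) (w : Equiv.Perm ℕ) : Prop :=
  ∀ i : ℕ, k ≤ i → i + 1 < k + l + m → i + 1 ≠ k + l → w i < w (i + 1)

theorem lower_fix_ge {k : ℕ} {w : Equiv.Perm ℕ} (hw : ∀ j, j < k → w j = j) {i : ℕ}
    (hi : k ≤ i) : k ≤ w i := by
  by_contra hc
  push_neg at hc
  have hw' : w⁻¹ (w i) = w i := by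
    conv_lhs => rw [← hw (w i) hc]
    simp
  simp only [Equiv.Perm.coe_inv, Equiv.symm_apply_apply] at hw'
  omega

def unshift (k : ℕ) (w : Equiv.Perm ℕ) (hw : ∀ j, j < k → w j = j) : Equiv.Perm ℕ where
  toFun i := w (i + k) - k
  invFun i := w⁻¹ (i + k) - k
  left_inv i := by
    have h1 : k ≤ w (i + k) := lower_fix_ge hw (by omega)
    have h2 : w (i + k) - k + k = w (i + k) := by omega
    show w⁻¹ (w (i + k) - k + k) - k = i
    rw [h2]
    simp
  right_inv i := by
    have hw2 : ∀ j, j < k → w⁻¹ j = j := by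
      intro j hj
      conv_lhs => rw [← hw j hj]
      simp
    have h1 : k ≤ w⁻¹ (i + k) := lower_fix_ge hw2 (by omega)
    have h2 : w⁻¹ (i + k) - k + k = w⁻¹ (i + k) := by omega
    show w (w⁻¹ (i + k) - k + k) - k = i
    rw [h2]
    simp

theorem shiftPerm_unshift {k : ℕ} {w : Equiv.Perm ℕ} (hw : ∀ j, j < k → w j = j) :
    shiftPerm k (unshift k w hw) = w := by
  ext j
  rcases Nat.lt_or_ge j k with h | h
  · rw [shiftPerm_apply_lt _ h, hw j h]
  · rw [shiftPerm_apply_ge _ h]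
    show unshift k w hw (j - k) + k = w j
    have h2 : j - k + k = j := by omega
    have h3 : k ≤ w j := lower_fix_ge hw h
    show w (j - k + k) - k + k = w j
    rw [h2]
    omega

theorem unshift_fixes {k r : ℕ} {w : Equiv.Perm ℕ} (hw : ∀ j, j < k → w j = j)
    (hf : FixesFrom (k + r) w) : FixesFrom r (unshift k w hw) := by
  intro j hj
  show w (j + k) - k = j
  rw [hf (j + k) (by omega)]
  omega

open Classical in
noncomputable def WBset (k l m : ℕ) : Finset (Equiv.Perm ℕ) :=
  (Finset.univ.image fun τ : Equiv.Perm (Fin (l + m)) => shiftPerm k (permOfFin τ)).filter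
    (SP k l m)

theorem mem_WBset {k l m : ℕ} {w : Equiv.Perm ℕ} :
    w ∈ WBset k l m ↔ BlockPerm k (k + l + m) w ∧ SP k l m w := by
  classical
  simp only [WBset, Finset.mem_filter, Finset.mem_image, Finset.mem_univ, true_and]
  constructor
  · rintro ⟨⟨τ, rfl⟩, hP⟩
    refine ⟨?_, hP⟩
    have := shiftPerm_blockPerm (k := k) (permOfFin_fixes τ)
    rwa [show k + (l + m) = k + l + m by omega] at this
  · rintro ⟨hb, hP⟩
    refine ⟨⟨finOfPerm (l + m) (unshift k w hb.1)
      (unshift_fixes hb.1 (fun j hj => hb.2 j (by omega))), ?_⟩, hP⟩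
    rw [permOfFin_finOfPerm, shiftPerm_unshift]

theorem yQShift_eq {K H : Type*} [Field K] [Ring H] [Algebra K H]
    (T : Equiv.Perm ℕ → H) (q : K) (k l m : ℕ) :
    yQShift T q k l m = ∑ w ∈ WBset k l m,
      ((-1 : K) ^ invLen (k + l + m) w * q ^ (l * m - invLen (k + l + m) w)) • T w := by
  classical
  rw [WBset, Finset.sum_filter,
    Finset.sum_image (fun x _ y _ h => permOfFin_injective (shiftPerm_injective k h))]
  rw [yQShift]
  apply Finset.sum_congr rfl
  intro τ _
  have hinv : invLen (k + l + m) (shiftPerm k (permOfFin τ)) = invLen (l + m) (permOfFin τ) := by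
    rw [show k + l + m = k + (l + m) by omega, invLen_shiftPerm]
  have hiff : isDist l m (permOfFin τ) ↔ SP k l m (shiftPerm k (permOfFin τ)) := by
    constructor
    · intro h i hki hin hne
      rw [shiftPerm_apply_ge _ hki, shiftPerm_apply_ge _ (by omega)]
      have : i + 1 - k = (i - k) + 1 := by omega
      rw [this]
      have := h (i - k) (by omega) (by omega)
      omega
    · intro h i hin hne
      have := h (i + k) (by omega) (by omega) (by omega)
      rw [shiftPerm_apply_ge _ (by omega), shiftPerm_apply_ge _ (by omega)] at this
      have e1 : i + k - k = i := by omega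
      have e2 : i + k + 1 - k = i + 1 := by omega
      rw [e1, e2] at this
      omega
  rw [hinv]
  split_ifs with h1 h2 h2
  · rfl
  · exact absurd (hiff.1 h1) h2
  · exact absurd (hiff.2 h2) h1
  · rfl

end S9
namespace S9

theorem sub_arith : ∀ A B C x y : ℕ, x ≤ A → y ≤ B → A + B = C →
    A - x + (B - y) = C - (x + y) := by omega

theorem sideA {K H : Type*} [Field K] [Ring H] [Algebra K H] (q : K) (k l m : ℕ)
    (T : Equiv.Perm ℕ → H)
    (hTmul : ∀ π σ : Equiv.Perm ℕ,
      (∀ j, k + l + m ≤ j → π j = j) → (∀ j, k + l + m ≤ j → σ j = j) →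
      invLen (k + l + m) (π * σ) = invLen (k + l + m) π + invLen (k + l + m) σ →
        T (π * σ) = T π * T σ) :
    yQ T q (k + l) m * yQ T q k l = yQ3 T q k l m := by
  classical
  rw [yQ_eq T q (k + l) m, yQ_eq T q k l, yQ3_eq T q k l m, Finset.sum_mul_sum,
    ← Finset.sum_product']
  apply Finset.sum_nbij' (fun p => p.1 * p.2)
    (fun d => (d * (sortP 0 (k + l) d)⁻¹, sortP 0 (k + l) d))
  · -- forward membership
    intro p hp
    rw [Finset.mem_product, mem_Dset, mem_Dset] at hp
    obtain ⟨⟨hπf, hπd⟩, hwf, hwd⟩ := hp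
    have hπm : ∀ i j, i < j → j < k + l → p.1 i < p.1 j :=
      fun i j => mono_of_adj (a := 0) (fun i _ hib => hπd i (by omega) (by omega)) i j (by omega)
    rw [mem_Dset]
    refine ⟨fixesFrom_mul hπf (fixesFrom_mono (by omega) hwf), ?_⟩
    intro i hin hk hkl
    simp only [Equiv.Perm.mul_apply]
    rcases Nat.lt_or_ge (i + 1) (k + l) with hc | hc
    · have hwlt : p.2 i < p.2 (i + 1) := hwd i hc hk
      have hwi : p.2 (i + 1) < k + l := fixesFrom_lt hwf hc
      exact hπm _ _ hwlt hwi
    · have hge : k + l ≤ i := by omega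
      rw [hwf i hge, hwf (i + 1) (by omega)]
      exact hπd i hin hkl
  · -- backward membership
    intro d hd
    rw [mem_Dset] at hd
    obtain ⟨hdf, hdd⟩ := hd
    have hsbp := sortP_blockPerm 0 (k + l) d
    rw [Finset.mem_product, mem_Dset, mem_Dset]
    refine ⟨⟨?_, ?_⟩, hsbp.2, ?_⟩
    · exact fixesFrom_mul hdf (fixesFrom_mono (by omega) (blockPerm_inv hsbp).2)
    · -- isDist (k+l) m (d * s⁻¹)
      intro i hin hne
      rcases Nat.lt_or_ge (i + 1) (k + l) with hc | hc
      · exact sorted_mul_sortP_inv d i (i + 1) (by omega) (by omega) hc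
      · have hge : k + l ≤ i := by omega
        rw [mul_sortP_inv_out d (Or.inr hge), mul_sortP_inv_out d (Or.inr (by omega))]
        exact hdd i hin (by omega) (by omega)
    · -- isDist k l (sortP 0 (k+l) d)
      intro i hib hik
      exact (sortP_lt_iff d ⟨by omega, by omega⟩ ⟨by omega, hib⟩).2
        (hdd i (by omega) hik (by omega))
  · -- left inverse
    intro p hp
    rw [Finset.mem_product, mem_Dset, mem_Dset] at hp
    obtain ⟨⟨hπf, hπd⟩, hwf, hwd⟩ := hp
    have hπm : ∀ i j, 0 ≤ i → i < j → j < k + l → p.1 i < p.1 j :=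
      fun i j _ => mono_of_adj (a := 0) (fun i _ hib => hπd i (by omega) (by omega)) i j (by omega)
    have hwbp : BlockPerm 0 (k + l) p.2 := ⟨fun j hj => by omega, hwf⟩
    have hs : sortP 0 (k + l) (p.1 * p.2) = p.2 := sortP_mul hπm hwbp
    rw [hs]
    ext <;> simp
  · -- right inverse
    intro d hd
    simp
  · -- values
    intro p hp
    rw [Finset.mem_product, mem_Dset, mem_Dset] at hp
    obtain ⟨⟨hπf, hπd⟩, hwf, hwd⟩ := hp
    have hwfn : FixesFrom (k + l + m) p.2 := fixesFrom_mono (by omega) hwf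
    have hπm : ∀ i j, 0 ≤ i → i < j → j < k + l → p.1 i < p.1 j :=
      fun i j _ => mono_of_adj (a := 0) (fun i _ hib => hπd i (by omega) (by omega)) i j (by omega)
    have hπm2 : ∀ i j, k + l ≤ i → i < j → j < k + l + m → p.1 i < p.1 j :=
      mono_of_adj (fun i hi hib => hπd i hib (by omega))
    have hwbp : BlockPerm 0 (k + l) p.2 := ⟨fun j hj => by omega, hwf⟩
    have hwm1 : ∀ i j, i < j → j < k → p.2 i < p.2 j :=
      fun i j => mono_of_adj (a := 0) (fun i _ hib => hwd i (by omega) (by omega)) i j (by omega)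
    have hwm2 : ∀ i j, k ≤ i → i < j → j < k + l → p.2 i < p.2 j :=
      mono_of_adj (fun i hi hib => hwd i hib (by omega))
    have hadd : invLen (k + l + m) (p.1 * p.2)
        = invLen (k + l + m) p.1 + invLen (k + l + m) p.2 :=
      invLen_mul_add (by omega) hπm hwbp
    have hrw : invLen (k + l + m) p.2 = invLen (k + l) p.2 := invLen_restrict (by omega) hwf
    have hb1 : invLen (k + l + m) p.1 ≤ (k + l) * m := by
      have hbd := invLen_le_bound' (n := k + l + m) (x1 := 0) (x2 := k + l) (x3 := k + l + m)
        (σ := p.1) ?_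
      · rw [Nat.sub_zero, show k + l + m - (k + l) = m by omega] at hbd
        exact hbd
      · intro i j hij hjn hinv
        refine ⟨by omega, ?_, ?_, hjn⟩
        · by_contra hc
          push_neg at hc
          exact absurd (hπm2 i j hc hij hjn) (by omega)
        · by_contra hc
          push_neg at hc
          exact absurd (hπm i j (by omega) hij (by omega)) (by omega)
    have hb2 : invLen (k + l) p.2 ≤ k * l := by
      have hbd := invLen_le_bound' (n := k + l) (x1 := 0) (x2 := k) (x3 := k + l)
        (σ := p.2) ?_
      · rw [Nat.sub_zero, show k + l - k = l by omega] at hbd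
        exact hbd
      · intro i j hij hjn hinv
        refine ⟨by omega, ?_, ?_, hjn⟩
        · by_contra hc
          push_neg at hc
          exact absurd (hwm2 i j hc hij hjn) (by omega)
        · by_contra hc
          push_neg at hc
          exact absurd (hwm1 i j hij hc) (by omega)
    have hT : T (p.1 * p.2) = T p.1 * T p.2 := hTmul p.1 p.2 hπf hwfn hadd
    rw [hT, smul_mul_assoc, mul_smul_comm, smul_smul, hadd, hrw]
    congr 1
    rw [← sub_arith ((k + l) * m) (k * l) (k * l + k * m + l * m)
      (invLen (k + l + m) p.1) (invLen (k + l) p.2) hb1 hb2 (by ring), pow_add, pow_add]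
    ring

end S9
namespace S9

theorem sideB {K H : Type*} [Field K] [Ring H] [Algebra K H] (q : K) (k l m : ℕ)
    (T : Equiv.Perm ℕ → H)
    (hTmul : ∀ π σ : Equiv.Perm ℕ,
      (∀ j, k + l + m ≤ j → π j = j) → (∀ j, k + l + m ≤ j → σ j = j) →
      invLen (k + l + m) (π * σ) = invLen (k + l + m) π + invLen (k + l + m) σ →
        T (π * σ) = T π * T σ) :
    yQ T q k (l + m) * yQShift T q k l m = yQ3 T q k l m := by
  classical
  rw [yQ_eq T q k (l + m), yQShift_eq T q k l m, yQ3_eq T q k l m,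
    show k + (l + m) = k + l + m by omega, Finset.sum_mul_sum, ← Finset.sum_product']
  apply Finset.sum_nbij' (fun p => p.1 * p.2)
    (fun d => (d * (sortP k (k + l + m) d)⁻¹, sortP k (k + l + m) d))
  · -- forward membership
    intro p hp
    rw [Finset.mem_product, mem_Dset, mem_WBset] at hp
    obtain ⟨⟨hπf, hπd⟩, hwb, hws⟩ := hp
    have hπm2 : ∀ i j, k ≤ i → i < j → j < k + l + m → p.1 i < p.1 j :=
      mono_of_adj (fun i hi hib => hπd i (by omega) (by omega))
    rw [mem_Dset]
    refine ⟨fixesFrom_mul hπf hwb.2, ?_⟩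
    intro i hin hk hkl
    simp only [Equiv.Perm.mul_apply]
    rcases Nat.lt_or_ge (i + 1) k with hc | hc
    · rw [hwb.1 i (by omega), hwb.1 (i + 1) hc]
      exact hπd i (by omega) hk
    · have hki : k ≤ i := by omega
      have hwlt : p.2 i < p.2 (i + 1) := hws i hki hin hkl
      have hwi : p.2 (i + 1) < k + l + m := (blockPerm_mem hwb (by omega) hin).2
      exact hπm2 _ _ (blockPerm_mem hwb hki (by omega)).1 hwlt hwi
  · -- backward membership
    intro d hd
    rw [mem_Dset] at hd
    obtain ⟨hdf, hdd⟩ := hd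
    have hsbp := sortP_blockPerm k (k + l + m) d
    rw [Finset.mem_product, mem_Dset, mem_WBset]
    refine ⟨⟨?_, ?_⟩, hsbp, ?_⟩
    · exact fixesFrom_mul hdf (blockPerm_inv hsbp).2
    · -- isDist k (l+m) (d * s⁻¹)
      intro i hin hne
      rcases Nat.lt_or_ge (i + 1) k with hc | hc
      · rw [mul_sortP_inv_out d (Or.inl (by omega)), mul_sortP_inv_out d (Or.inl hc)]
        exact hdd i (by omega) hne (by omega)
      · exact sorted_mul_sortP_inv d i (i + 1) (by omega) (by omega) (by omega)
    · -- SP k l m (sortP k (k+l+m) d)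
      intro i hki hin hkl
      exact (sortP_lt_iff d ⟨hki, by omega⟩ ⟨by omega, hin⟩).2
        (hdd i hin (by omega) hkl)
  · -- left inverse
    intro p hp
    rw [Finset.mem_product, mem_Dset, mem_WBset] at hp
    obtain ⟨⟨hπf, hπd⟩, hwb, hws⟩ := hp
    have hπm2 : ∀ i j, k ≤ i → i < j → j < k + l + m → p.1 i < p.1 j :=
      mono_of_adj (fun i hi hib => hπd i (by omega) (by omega))
    have hs : sortP k (k + l + m) (p.1 * p.2) = p.2 := sortP_mul hπm2 hwb
    rw [hs]
    ext <;> simp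
  · -- right inverse
    intro d hd
    simp
  · -- values
    intro p hp
    rw [Finset.mem_product, mem_Dset, mem_WBset] at hp
    obtain ⟨⟨hπf, hπd⟩, hwb, hws⟩ := hp
    have hπm1 : ∀ i j, i < j → j < k → p.1 i < p.1 j :=
      fun i j => mono_of_adj (a := 0) (fun i _ hib => hπd i (by omega) (by omega)) i j (by omega)
    have hπm2 : ∀ i j, k ≤ i → i < j → j < k + l + m → p.1 i < p.1 j :=
      mono_of_adj (fun i hi hib => hπd i (by omega) (by omega))
    have hwm1 : ∀ i j, k ≤ i → i < j → j < k + l → p.2 i < p.2 j :=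
      mono_of_adj (fun i hi hib => hws i hi (by omega) (by omega))
    have hwm2 : ∀ i j, k + l ≤ i → i < j → j < k + l + m → p.2 i < p.2 j :=
      mono_of_adj (fun i hi hib => hws i (by omega) hib (by omega))
    have hadd : invLen (k + l + m) (p.1 * p.2)
        = invLen (k + l + m) p.1 + invLen (k + l + m) p.2 :=
      invLen_mul_add (le_refl (k + l + m)) hπm2 hwb
    have hb1 : invLen (k + l + m) p.1 ≤ k * (l + m) := by
      have hbd := invLen_le_bound' (n := k + l + m) (x1 := 0) (x2 := k) (x3 := k + l + m)
        (σ := p.1) ?_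
      · rw [Nat.sub_zero, show k + l + m - k = l + m by omega] at hbd
        exact hbd
      · intro i j hij hjn hinv
        refine ⟨by omega, ?_, ?_, hjn⟩
        · by_contra hc
          push_neg at hc
          exact absurd (hπm2 i j hc hij hjn) (by omega)
        · by_contra hc
          push_neg at hc
          exact absurd (hπm1 i j hij (by omega)) (by omega)
    have hb2 : invLen (k + l + m) p.2 ≤ l * m := by
      have hbd := invLen_le_bound' (n := k + l + m) (x1 := k) (x2 := k + l) (x3 := k + l + m)
        (σ := p.2) ?_
      · rw [show k + l - k = l by omega, show k + l + m - (k + l) = m by omega] at hbd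
        exact hbd
      · intro i j hij hjn hinv
        have hki : k ≤ i := by
          by_contra hc
          push_neg at hc
          exact absurd (blockPerm_lt_of_lt hwb hij (Or.inl hc)) (by omega)
        refine ⟨hki, ?_, ?_, hjn⟩
        · by_contra hc
          push_neg at hc
          exact absurd (hwm2 i j hc hij hjn) (by omega)
        · by_contra hc
          push_neg at hc
          exact absurd (hwm1 i j hki hij (by omega)) (by omega)
    have hT : T (p.1 * p.2) = T p.1 * T p.2 := hTmul p.1 p.2 hπf hwb.2 hadd
    rw [hT, smul_mul_assoc, mul_smul_comm, smul_smul, hadd]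
    congr 1
    rw [← sub_arith (k * (l + m)) (l * m) (k * l + k * m + l * m)
      (invLen (k + l + m) p.1) (invLen (k + l + m) p.2) hb1 hb2 (by ring), pow_add, pow_add]
    ring

end S9
/-- In the Hecke algebra `H_{k+l+m}(q)`, the partial antisymmetrizers satisfy
`y_{k+l+m/k+l,m} · y_{k+l/k,l} = y_{k+l+m/k,l+m} · y_{l+m/l,m}^{(k)}`, both sides being
equal to `y(S_{k+l+m}/S_{k,l,m})`. -/
theorem stmt9 {K H : Type*} [Field K] [Ring H] [Algebra K H] (q : K) (k l m : ℕ)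
    (T : Equiv.Perm ℕ → H)
    (hT1 : T 1 = 1)
    (hTq : ∀ i : ℕ, i + 1 < k + l + m →
      (T (tau i) - algebraMap K H q) * (T (tau i) + 1) = 0)
    (hTmul : ∀ π σ : Equiv.Perm ℕ,
      (∀ j, k + l + m ≤ j → π j = j) → (∀ j, k + l + m ≤ j → σ j = j) →
      invLen (k + l + m) (π * σ) = invLen (k + l + m) π + invLen (k + l + m) σ →
        T (π * σ) = T π * T σ) :
    yQ T q (k + l) m * yQ T q k l = yQ T q k (l + m) * yQShift T q k l m ∧
    yQ T q (k + l) m * yQ T q k l = yQ3 T q k l m := by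
  have hA := S9.sideA q k l m T hTmul
  have hB := S9.sideB q k l m T hTmul
  exact ⟨hA.trans hB.symm, hA⟩
end

section
/- Let k be a field of characteristic ≠ 2,3 containing a primitive cube root of unity, let a, c ∈ k with abc ≠ 0 (b = a) and suppose 2κ² + 2κ = 1 where κ = a/c, and suppose λ, q ∈ k satisfy λ(ε − ε²) = q(1+q+q²), λ²(1+2κ)(ε² − ε) = q³(1+q+q²), and (3+6κ)λ³ = q⁶, where ε is a primitive cube root of unity and λ ≠ 0, q ≠ 0. Then a contradiction follows: these equations have no common solution. (Equivalently: from the first two equations (1+2κ)λ = −q², and since (1+2κ)² = 3, one gets (3+6κ)λ³ = ((1+2κ)λ)³ = −q⁶ ≠ q⁶.) -/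
/-- The elimination argument in Case 4 of Theorem 5.1: over a field of characteristic
`≠ 2, 3` with a primitive cube root of unity `ε`, if `b = a`, `abc ≠ 0`, `κ = a/c`
satisfies `2κ² + 2κ = 1`, and `λ ≠ 0`, `q ≠ 0` satisfy `λ(ε − ε²) = q(1+q+q²)`,
`λ²(1+2κ)(ε² − ε) = q³(1+q+q²)` and `(3+6κ)λ³ = q⁶`, then a contradiction follows. -/
theorem stmt19 {k : Type*} [Field k] (hchar2 : (2 : k) ≠ 0) (hchar3 : (3 : k) ≠ 0)
    (ε a b c κ lam q : k) (hε3 : ε ^ 3 = 1) (hε : 1 + ε + ε ^ 2 = 0)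
    (hb : b = a) (habc : a * b * c ≠ 0) (hκ : κ = a / c) (hkey : 2 * κ ^ 2 + 2 * κ = 1)
    (hlam : lam ≠ 0) (hq : q ≠ 0)
    (e1 : lam * (ε - ε ^ 2) = q * (1 + q + q ^ 2))
    (e2 : lam ^ 2 * (1 + 2 * κ) * (ε ^ 2 - ε) = q ^ 3 * (1 + q + q ^ 2))
    (e3 : (3 + 6 * κ) * lam ^ 3 = q ^ 6) : False := by
  have hsq : (1 + 2 * κ) ^ 2 = 3 := by linear_combination 2 * hkey
  have hne : ε - ε ^ 2 ≠ 0 := by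
    intro h
    have h9 : (9 : k) = 0 := by
      linear_combination (-8) * hε3 + (4 * ε ^ 2 - 2 * ε + 1) * (hε + h)
    have h33 : (3 : k) * 3 = 0 := by linear_combination h9
    rcases mul_eq_zero.mp h33 with h | h <;> exact hchar3 h
  have h4 : ((1 + 2 * κ) * lam + q ^ 2) * (q * (1 + q + q ^ 2)) = 0 := by
    linear_combination (-(1 + 2 * κ) * lam) * e1 - e2
  rcases mul_eq_zero.mp h4 with hkl | hQ
  · have hkl' : (1 + 2 * κ) * lam = -q ^ 2 := by linear_combination hkl
    have h2q : (2 : k) * q ^ 6 = 0 := by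
      linear_combination (-1 : k) * e3 +
        ((1 + 2 * κ) ^ 2 * lam ^ 2 - (1 + 2 * κ) * lam * q ^ 2 + q ^ 4) * hkl' -
        (1 + 2 * κ) * lam ^ 3 * hsq
    rcases mul_eq_zero.mp h2q with h | h
    · exact hchar2 h
    · exact hq (pow_eq_zero_iff (by norm_num) |>.mp h)
  · have : lam * (ε - ε ^ 2) = 0 := by rw [e1]; linear_combination hQ
    rcases mul_eq_zero.mp this with h | h
    · exact hlam h
    · exact hne h
end
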